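/- arXiv:2502.09047 — 5 statements merged into one kernel-verified Lean document; each statement's English description precedes it below -/
import Mathlib

section
/- Let x be a random vector in ℝ^d with S = E[x xᵀ], and suppose there is ψ ≥ 1 such that E[x xᵀ A x xᵀ] ⪯ ψ tr(S A) S for every positive semi-definite d×d matrix A. Fix scalars δ, q and define the random 2d×2d block matrix Ĝ = [[0, δ x xᵀ],[0, q x xᵀ]]. Then for every positive semi-definite 2d×2d matrix M, E[Ĝ M Ĝᵀ] ⪯ ψ · ⟨[[0,0],[0,S]], M⟩ · [[δ² S, δq S],[δq S, q² S]]. -/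
open Matrix MeasureTheory

noncomputable section

/-- The trace inner product `⟨A, B⟩ = tr (Aᵀ B)` for `2d × 2d` (block-indexed) matrices. -/
def traceInner2 {d : ℕ} (A B : Matrix (Fin d ⊕ Fin d) (Fin d ⊕ Fin d) ℝ) : ℝ :=
  (Aᵀ * B).trace

lemma aux1 {n : Type*} [Fintype n] (u v : n → ℝ) (M : Matrix n n ℝ) (i j : n) :
    (vecMulVec u v * M * (vecMulVec u v)ᵀ) i j = (v ⬝ᵥ M *ᵥ v) * (u i * u j) := by
  simp only [Matrix.mul_apply, vecMulVec_apply, transpose_apply, dotProduct, Matrix.mulVec,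
    Finset.sum_mul, Finset.mul_sum]
  rw [Finset.sum_comm]
  exact Finset.sum_congr rfl fun k _ => Finset.sum_congr rfl fun l _ => by ring

lemma aux2 {n : Type*} [Fintype n] {R : Matrix n n ℝ} (hR : R.PosSemidef) :
    (fromBlocks R 0 0 0 : Matrix (n ⊕ n) (n ⊕ n) ℝ).PosSemidef := by
  rw [posSemidef_iff_dotProduct_mulVec]
  constructor
  · have h : ∀ i j, R j i = R i j := fun i j => hR.1.apply i j
    ext i j; cases i <;> cases j <;> simp [conjTranspose, fromBlocks, h]
  · intro y
    have := (posSemidef_iff_dotProduct_mulVec.1 hR).2 (y ∘ Sum.inl)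
    simpa [dotProduct, Fintype.sum_sum_type, Matrix.mulVec, fromBlocks, Finset.mul_sum] using this

lemma aux3 {n : Type*} [Fintype n] [DecidableEq n] {R : Matrix n n ℝ} (hR : R.PosSemidef)
    (δ q : ℝ) :
    (fromBlocks ((δ^2) • R) ((δ*q) • R) ((δ*q) • R) ((q^2) • R)).PosSemidef := by
  have h := aux2 hR |>.conjTranspose_mul_mul_same
    (fromBlocks (δ • 1) (q • 1) 0 0 : Matrix (n ⊕ n) (n ⊕ n) ℝ)
  have e : fromBlocks ((δ^2) • R) ((δ*q) • R) ((δ*q) • R) ((q^2) • R) =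
      (fromBlocks (δ • 1) (q • 1) 0 0 : Matrix (n⊕n) (n⊕n) ℝ)ᴴ * fromBlocks R 0 0 0 *
      fromBlocks (δ • 1) (q • 1) 0 0 := by
    simp [fromBlocks_transpose, fromBlocks_multiply, Matrix.smul_mul, Matrix.mul_smul,
      smul_smul, mul_comm, pow_two]
  rw [e]; exact h

/-- Let `x` be a random vector in `ℝ^d` with `S = E[x xᵀ]` satisfying the
fourth-moment condition `E[x xᵀ A x xᵀ] ⪯ ψ tr(S A) S` for every PSD `A` (`ψ ≥ 1`). For
scalars `δ, q` put `Ĝ = [[0, δ x xᵀ], [0, q x xᵀ]]` (a random `2d × 2d` block matrix). Then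
for every PSD `2d × 2d` matrix `M`,
`E[Ĝ M Ĝᵀ] ⪯ ψ · ⟨[[0,0],[0,S]], M⟩ · [[δ² S, δq S], [δq S, q² S]]`. -/
theorem block_fourth_moment_bound {d : ℕ} {Ω : Type} [MeasurableSpace Ω]
    (μ : Measure Ω) [IsProbabilityMeasure μ]
    (x : Ω → Fin d → ℝ) (hmeas : ∀ i, Measurable fun ω => x ω i)
    (hint2 : ∀ i j, Integrable (fun ω => x ω i * x ω j) μ)
    (hint4 : ∀ i j k l, Integrable (fun ω => x ω i * x ω j * x ω k * x ω l) μ)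
    (S : Matrix (Fin d) (Fin d) ℝ)
    (hSdef : S = Matrix.of fun i j => ∫ ω, x ω i * x ω j ∂μ)
    (ψ : ℝ) (hψ : 1 ≤ ψ)
    (hmom4 : ∀ A : Matrix (Fin d) (Fin d) ℝ, A.PosSemidef →
      ((ψ * (S * A).trace) • S -
        Matrix.of fun i j => ∫ ω, (x ω ⬝ᵥ A.mulVec (x ω)) * (x ω i * x ω j) ∂μ).PosSemidef)
    (δ q : ℝ)
    (Ghat : Ω → Matrix (Fin d ⊕ Fin d) (Fin d ⊕ Fin d) ℝ)
    (hGhat : ∀ ω, Ghat ω =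
      Matrix.fromBlocks 0 (δ • vecMulVec (x ω) (x ω)) 0 (q • vecMulVec (x ω) (x ω)))
    (M : Matrix (Fin d ⊕ Fin d) (Fin d ⊕ Fin d) ℝ) (hM : M.PosSemidef) :
    ((ψ * traceInner2 (Matrix.fromBlocks 0 0 0 S) M) •
        Matrix.fromBlocks ((δ ^ 2) • S) ((δ * q) • S) ((δ * q) • S) ((q ^ 2) • S) -
      Matrix.of fun i j => ∫ ω, (Ghat ω * M * (Ghat ω)ᵀ) i j ∂μ).PosSemidef := by
  classical
  set D : Matrix (Fin d) (Fin d) ℝ := M.submatrix Sum.inr Sum.inr with hDdef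
  have hD : D.PosSemidef := hM.submatrix Sum.inr
  set T : Matrix (Fin d) (Fin d) ℝ :=
    Matrix.of fun i j => ∫ ω, (x ω ⬝ᵥ D.mulVec (x ω)) * (x ω i * x ω j) ∂μ with hTdef
  have hR : ((ψ * (S * D).trace) • S - T).PosSemidef := hmom4 D hD
  -- S is symmetric
  have hSsym : ∀ i j, S i j = S j i := by
    intro i j; rw [hSdef]; simp only [Matrix.of_apply]
    exact integral_congr_ae (Filter.Eventually.of_forall fun ω => mul_comm _ _)
  -- traceInner2 computation
  have htr : traceInner2 (Matrix.fromBlocks 0 0 0 S) M = (S * D).trace := by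
    simp only [traceInner2, Matrix.trace, Matrix.diag, Matrix.mul_apply,
      Fintype.sum_sum_type, transpose_apply, fromBlocks_apply₁₁, fromBlocks_apply₁₂,
      fromBlocks_apply₂₁, fromBlocks_apply₂₂, Matrix.zero_apply, zero_mul,
      Finset.sum_const_zero, add_zero, zero_add, hDdef, submatrix_apply]
    rw [Finset.sum_comm]
    have hMsym : ∀ a b, M a b = M b a := fun a b => by
      have := hM.1.apply a b; simpa using this.symm
    exact Finset.sum_congr rfl fun i _ => Finset.sum_congr rfl fun j _ => by
      rw [hMsym]
  -- pointwise identity for the integrand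
  have hpt : ∀ ω, ∀ i j, (Ghat ω * M * (Ghat ω)ᵀ) i j =
      (x ω ⬝ᵥ D *ᵥ x ω) * (Sum.elim (δ • x ω) (q • x ω) i * Sum.elim (δ • x ω) (q • x ω) j) := by
    intro ω i j
    have hGe : Ghat ω = vecMulVec (Sum.elim (δ • x ω) (q • x ω)) (Sum.elim 0 (x ω)) := by
      rw [hGhat]; ext a b
      cases a <;> cases b <;> simp [vecMulVec_apply, fromBlocks, mul_assoc]
    rw [hGe, aux1]
    congr 1
    simp [dotProduct, Matrix.mulVec, Fintype.sum_sum_type, hDdef]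
  -- the matrix identity
  have key : ((ψ * traceInner2 (Matrix.fromBlocks 0 0 0 S) M) •
        Matrix.fromBlocks ((δ ^ 2) • S) ((δ * q) • S) ((δ * q) • S) ((q ^ 2) • S) -
      Matrix.of fun i j => ∫ ω, (Ghat ω * M * (Ghat ω)ᵀ) i j ∂μ) =
      fromBlocks ((δ^2) • ((ψ * (S * D).trace) • S - T)) ((δ*q) • ((ψ * (S * D).trace) • S - T))
        ((δ*q) • ((ψ * (S * D).trace) • S - T)) ((q^2) • ((ψ * (S * D).trace) • S - T)) := by
    rw [htr]
    ext i j
    have hint : ∀ (c : ℝ) (a b : Fin d) i j, (∀ ω, (Ghat ω * M * (Ghat ω)ᵀ) i j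
          = c * ((x ω ⬝ᵥ D *ᵥ x ω) * (x ω a * x ω b))) →
        ∫ ω, (Ghat ω * M * (Ghat ω)ᵀ) i j ∂μ = c * T a b := by
      intro c a b i j h
      simp only [h]
      rw [MeasureTheory.integral_const_mul]
      rfl
    cases i with
    | inl a => cases j with
      | inl b =>
        simp only [Matrix.sub_apply, Matrix.smul_apply, Matrix.of_apply,
          fromBlocks_apply₁₁, fromBlocks_apply₁₂, fromBlocks_apply₂₁, fromBlocks_apply₂₂,
          smul_eq_mul]
        rw [hint (δ*δ) a b _ _ fun ω => by
            rw [hpt]; simp only [Sum.elim_inl, Pi.smul_apply, smul_eq_mul]; ring]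
        ring
      | inr b =>
        simp only [Matrix.sub_apply, Matrix.smul_apply, Matrix.of_apply,
          fromBlocks_apply₁₁, fromBlocks_apply₁₂, fromBlocks_apply₂₁, fromBlocks_apply₂₂,
          smul_eq_mul]
        rw [hint (δ*q) a b _ _ fun ω => by
            rw [hpt]; simp only [Sum.elim_inl, Sum.elim_inr, Pi.smul_apply, smul_eq_mul]; ring]
        ring
    | inr a => cases j with
      | inl b =>
        simp only [Matrix.sub_apply, Matrix.smul_apply, Matrix.of_apply,
          fromBlocks_apply₁₁, fromBlocks_apply₁₂, fromBlocks_apply₂₁, fromBlocks_apply₂₂,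
          smul_eq_mul]
        rw [hint (q*δ) a b _ _ fun ω => by
            rw [hpt]; simp only [Sum.elim_inl, Sum.elim_inr, Pi.smul_apply, smul_eq_mul]; ring]
        ring
      | inr b =>
        simp only [Matrix.sub_apply, Matrix.smul_apply, Matrix.of_apply,
          fromBlocks_apply₁₁, fromBlocks_apply₁₂, fromBlocks_apply₂₁, fromBlocks_apply₂₂,
          smul_eq_mul]
        rw [hint (q*q) a b _ _ fun ω => by
            rw [hpt]; simp only [Sum.elim_inr, Pi.smul_apply, smul_eq_mul]; ring]
        ring
  rw [key]
  exact aux3 hR δ q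

end
end

section
/- Let c ∈ [0,1), 0 < δ ≤ q, and λ ≥ 0, and let x_1 = (1+c−qλ)/2 − √((1+c−qλ)² − 4c(1−δλ))/2 and x_2 = (1+c−qλ)/2 + √((1+c−qλ)² − 4c(1−δλ))/2 be the eigenvalues of A(λ) = [[0, 1−δλ],[−c, 1+c−qλ]]. Then: (i) if λ ∈ I₁ = [0, λ†], x_1 and x_2 are real and x_1 ≤ x_2 ≤ 1 − ((q−cδ)/(1−c))·λ; (ii) if λ ∈ I₂ = (λ†, λ‡), x_1 and x_2 are complex conjugates with |x_1| = |x_2| = √(c(1−δλ)); (iii) if λ ∈ I₃ = [λ‡, ∞), x_1 and x_2 are real and x_1 ≤ x_2 ≤ cδ/q; where λ† = (1−c)²/(√(q−cδ) + √(c(q−δ)))² and λ‡ = (1−c)²/(√(q−cδ) − √(c(q−δ)))². -/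
open Matrix Real

noncomputable section

/-- The 2×2 momentum matrix `A(λ) = [[0, 1−δλ], [−c, 1+c−qλ]]`. -/
def Amat (c δ q lam : ℝ) : Matrix (Fin 2) (Fin 2) ℝ :=
  !![0, 1 - δ * lam; -c, 1 + c - q * lam]

/-- `x₁ = (1+c−qλ)/2 − √((1+c−qλ)² − 4c(1−δλ))/2`, as a complex number (principal square root). -/
def eig1 (c δ q lam : ℝ) : ℂ :=
  (((1 + c - q * lam : ℝ) : ℂ)) / 2 -
    ((((1 + c - q * lam) ^ 2 - 4 * c * (1 - δ * lam) : ℝ) : ℂ) ^ ((1 : ℂ) / 2)) / 2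

/-- `x₂ = (1+c−qλ)/2 + √((1+c−qλ)² − 4c(1−δλ))/2`, as a complex number (principal square root). -/
def eig2 (c δ q lam : ℝ) : ℂ :=
  (((1 + c - q * lam : ℝ) : ℂ)) / 2 +
    ((((1 + c - q * lam) ^ 2 - 4 * c * (1 - δ * lam) : ℝ) : ℂ) ^ ((1 : ℂ) / 2)) / 2

/-- `λ† = (1−c)²/(√(q−cδ) + √(c(q−δ)))²`. -/
def lamDagger (c δ q : ℝ) : ℝ :=
  (1 - c) ^ 2 / (Real.sqrt (q - c * δ) + Real.sqrt (c * (q - δ))) ^ 2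

/-- `λ‡ = (1−c)²/(√(q−cδ) − √(c(q−δ)))²`. -/
def lamDDagger (c δ q : ℝ) : ℝ :=
  (1 - c) ^ 2 / (Real.sqrt (q - c * δ) - Real.sqrt (c * (q - δ))) ^ 2

lemma cpow_half_of_nonneg {x : ℝ} (hx : 0 ≤ x) :
    ((x:ℂ)) ^ ((1 : ℂ)/2) = (Real.sqrt x : ℂ) := by
  rw [show ((1:ℂ)/2) = (((1/2 : ℝ)) : ℂ) by norm_num, ← Complex.ofReal_cpow hx,
    ← Real.sqrt_eq_rpow]

lemma cpow_half_of_neg {x : ℝ} (hx : x < 0) :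
    ((x:ℂ)) ^ ((1 : ℂ)/2) = Complex.I * (Real.sqrt (-x) : ℂ) := by
  rw [Complex.ofReal_cpow_of_nonpos hx.le]
  rw [show (-(x:ℂ)) = ((-x : ℝ) : ℂ) by push_cast; ring,
    show ((1:ℂ)/2) = (((1/2 : ℝ)) : ℂ) by norm_num,
    ← Complex.ofReal_cpow (by linarith : (0:ℝ) ≤ -x), ← Real.sqrt_eq_rpow]
  rw [show (↑Real.pi * Complex.I * (((1/2:ℝ)):ℂ)) = ((Real.pi/2 : ℝ) : ℂ) * Complex.I by
    push_cast; ring]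
  rw [Complex.exp_mul_I, ← Complex.ofReal_cos, ← Complex.ofReal_sin]
  norm_num [Real.cos_pi_div_two, Real.sin_pi_div_two]
  ring

set_option maxHeartbeats 1000000 in
/-- Characterization of the eigenvalues `x₁, x₂` of the momentum matrix `A(λ)`
on the three intervals `I₁ = [0, λ†]`, `I₂ = (λ†, λ‡)`, `I₃ = [λ‡, ∞)`. -/
theorem momentum_matrix_eigenvalue_bounds
    (c δ q lam : ℝ) (hc0 : 0 ≤ c) (hc1 : c < 1) (hδ : 0 < δ) (hδq : δ ≤ q) (hlam : 0 ≤ lam) :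
    (lam ≤ lamDagger c δ q →
      (eig1 c δ q lam).im = 0 ∧ (eig2 c δ q lam).im = 0 ∧
      (eig1 c δ q lam).re ≤ (eig2 c δ q lam).re ∧
      (eig2 c δ q lam).re ≤ 1 - (q - c * δ) / (1 - c) * lam) ∧
    (lamDagger c δ q < lam → lam < lamDDagger c δ q →
      (starRingEnd ℂ) (eig2 c δ q lam) = eig1 c δ q lam ∧
      ‖eig1 c δ q lam‖ = Real.sqrt (c * (1 - δ * lam)) ∧
      ‖eig2 c δ q lam‖ = Real.sqrt (c * (1 - δ * lam))) ∧
    (lamDDagger c δ q ≤ lam →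
      (eig1 c δ q lam).im = 0 ∧ (eig2 c δ q lam).im = 0 ∧
      (eig1 c δ q lam).re ≤ (eig2 c δ q lam).re ∧
      (eig2 c δ q lam).re ≤ c * δ / q) := by
  have hq : 0 < q := lt_of_lt_of_le hδ hδq
  have h1c : 0 < 1 - c := by linarith
  have hu : 0 < q - c * δ := by nlinarith
  have hv : 0 ≤ c * (q - δ) := by nlinarith
  set sa : ℝ := Real.sqrt (q - c * δ) with hsa_def
  set sv : ℝ := Real.sqrt (c * (q - δ)) with hsv_def
  have hsa2 : sa ^ 2 = q - c * δ := Real.sq_sqrt hu.le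
  have hsv2 : sv ^ 2 = c * (q - δ) := Real.sq_sqrt hv
  have hsv0 : 0 ≤ sv := Real.sqrt_nonneg _
  have hsa0 : 0 ≤ sa := Real.sqrt_nonneg _
  have hsasv : sv < sa := by nlinarith
  have hdag : lamDagger c δ q = (sa - sv) ^ 2 / q ^ 2 := by
    rw [lamDagger, ← hsa_def, ← hsv_def,
      div_eq_div_iff (show ((sa + sv) ^ 2 : ℝ) ≠ 0 by positivity)
        (show (q ^ 2 : ℝ) ≠ 0 by positivity)]
    linear_combination (-(q - c * δ - c * (q - δ) + sa ^ 2 - sv ^ 2)) * hsa2 +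
      (q - c * δ - c * (q - δ) + sa ^ 2 - sv ^ 2) * hsv2
  have hddag : lamDDagger c δ q = (sa + sv) ^ 2 / q ^ 2 := by
    rw [lamDDagger, ← hsa_def, ← hsv_def,
      div_eq_div_iff (show ((sa - sv) ^ 2 : ℝ) ≠ 0 from (pow_pos (by linarith) 2).ne')
        (show (q ^ 2 : ℝ) ≠ 0 by positivity)]
    linear_combination (-(q - c * δ - c * (q - δ) + sa ^ 2 - sv ^ 2)) * hsa2 +
      (q - c * δ - c * (q - δ) + sa ^ 2 - sv ^ 2) * hsv2
  have hfac : q ^ 2 * ((1 + c - q * lam) ^ 2 - 4 * c * (1 - δ * lam)) =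
      (q ^ 2 * lam - (sa - sv) ^ 2) * (q ^ 2 * lam - (sa + sv) ^ 2) := by
    linear_combination (2 * q ^ 2 * lam - (q - c * δ - c * (q - δ) + sa ^ 2 - sv ^ 2)) * hsa2 +
      (2 * q ^ 2 * lam + (q - c * δ - c * (q - δ) + sa ^ 2 - sv ^ 2)) * hsv2
  have hexp : (sa + sv) ^ 2 = (q - c * δ) + c * (q - δ) + 2 * (sa * sv) := by
    linear_combination hsa2 + hsv2
  refine ⟨?_, ?_, ?_⟩
  · -- Case I₁ : lam ≤ λ†
    intro h
    have hql : q ^ 2 * lam ≤ (sa - sv) ^ 2 := by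
      rw [hdag, le_div_iff₀ (show (0:ℝ) < q ^ 2 by positivity)] at h; linarith
    have hD0 : 0 ≤ (1 + c - q * lam) ^ 2 - 4 * c * (1 - δ * lam) := by
      have h2 : q ^ 2 * lam - (sa + sv) ^ 2 ≤ 0 := by
        nlinarith [mul_nonneg hsa0 hsv0]
      have h1 : q ^ 2 * lam - (sa - sv) ^ 2 ≤ 0 := by linarith
      have hprod := mul_nonneg (neg_nonneg.mpr h1) (neg_nonneg.mpr h2)
      nlinarith [hfac, hprod, pow_pos hq 2]
    set S : ℝ := Real.sqrt ((1 + c - q * lam) ^ 2 - 4 * c * (1 - δ * lam)) with hS_def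
    have hS2 : S ^ 2 = (1 + c - q * lam) ^ 2 - 4 * c * (1 - δ * lam) := Real.sq_sqrt hD0
    have hS0 : 0 ≤ S := Real.sqrt_nonneg _
    have e1 : eig1 c δ q lam = (((1 + c - q * lam - S) / 2 : ℝ) : ℂ) := by
      rw [eig1, cpow_half_of_nonneg hD0, ← hS_def]; push_cast; ring
    have e2 : eig2 c δ q lam = (((1 + c - q * lam + S) / 2 : ℝ) : ℂ) := by
      rw [eig2, cpow_half_of_nonneg hD0, ← hS_def]; push_cast; ring
    refine ⟨by simp [e1], by simp [e2], by simp [e1, e2]; linarith, ?_⟩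
    have hql' : lam * (sa + sv) ^ 2 ≤ (1 - c) ^ 2 := by
      rw [lamDagger, ← hsa_def, ← hsv_def,
        le_div_iff₀ (show (0:ℝ) < (sa + sv) ^ 2 by positivity)] at h
      exact h
    have hT0 : 0 ≤ (1 - c) ^ 2 - lam * ((q - c * δ) + c * (q - δ)) := by
      nlinarith [hql', hexp, mul_nonneg (mul_nonneg hlam hsa0) hsv0]
    have hTS : S * (1 - c) ≤ (1 - c) ^ 2 - lam * ((q - c * δ) + c * (q - δ)) := by
      have hid : ((1 - c) ^ 2 - lam * ((q - c * δ) + c * (q - δ))) ^ 2 - (S * (1 - c)) ^ 2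
          = 4 * ((q - c * δ) * (c * (q - δ))) * lam ^ 2 := by
        linear_combination (-(1 - c) ^ 2) * hS2
      have hsq : (S * (1 - c)) ^ 2
          ≤ ((1 - c) ^ 2 - lam * ((q - c * δ) + c * (q - δ))) ^ 2 := by
        nlinarith [hid, mul_nonneg (mul_nonneg hu.le hv) (sq_nonneg lam)]
      have := Real.sqrt_le_sqrt hsq
      rwa [Real.sqrt_sq (by positivity), Real.sqrt_sq hT0] at this
    rw [e2, Complex.ofReal_re,
      show (1 : ℝ) - (q - c * δ) / (1 - c) * lam
        = (2 * (1 - c) - 2 * (q - c * δ) * lam) / (2 * (1 - c)) by field_simp,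
      div_le_div_iff₀ (show (0:ℝ) < 2 by norm_num)
        (show (0:ℝ) < 2 * (1 - c) by positivity)]
    nlinarith [hTS]
  · -- Case I₂ : λ† < lam < λ‡
    intro h1 h2
    have hql1 : (sa - sv) ^ 2 < q ^ 2 * lam := by
      rw [hdag, div_lt_iff₀ (show (0:ℝ) < q ^ 2 by positivity)] at h1; linarith
    have hql2 : q ^ 2 * lam < (sa + sv) ^ 2 := by
      rw [hddag, lt_div_iff₀ (show (0:ℝ) < q ^ 2 by positivity)] at h2; linarith
    have hDneg : (1 + c - q * lam) ^ 2 - 4 * c * (1 - δ * lam) < 0 := by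
      nlinarith [hfac, mul_pos (by linarith : 0 < q ^ 2 * lam - (sa - sv) ^ 2)
        (by linarith : 0 < (sa + sv) ^ 2 - q ^ 2 * lam), pow_pos hq 2]
    set W : ℝ := Real.sqrt (-((1 + c - q * lam) ^ 2 - 4 * c * (1 - δ * lam))) with hW_def
    have hW2 : W ^ 2 = -((1 + c - q * lam) ^ 2 - 4 * c * (1 - δ * lam)) :=
      Real.sq_sqrt (by linarith)
    have hW0 : 0 ≤ W := Real.sqrt_nonneg _
    have e1 : eig1 c δ q lam
        = (((1 + c - q * lam) / 2 : ℝ) : ℂ) + ((-(W / 2) : ℝ) : ℂ) * Complex.I := by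
      rw [eig1, cpow_half_of_neg hDneg, ← hW_def]; push_cast; ring
    have e2 : eig2 c δ q lam
        = (((1 + c - q * lam) / 2 : ℝ) : ℂ) + ((W / 2 : ℝ) : ℂ) * Complex.I := by
      rw [eig2, cpow_half_of_neg hDneg, ← hW_def]; push_cast; ring
    have habs : ((1 + c - q * lam) / 2) ^ 2 + (W / 2) ^ 2 = c * (1 - δ * lam) := by
      linear_combination (1 / 4) * hW2
    refine ⟨?_, ?_, ?_⟩
    · rw [e1, e2, map_add, _root_.map_mul, Complex.conj_ofReal, Complex.conj_ofReal,
        Complex.conj_I]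
      push_cast; ring
    · rw [e1, Complex.norm_add_mul_I,
        show ((1 + c - q * lam) / 2) ^ 2 + (-(W / 2)) ^ 2 = c * (1 - δ * lam) by
          linear_combination habs]
    · rw [e2, Complex.norm_add_mul_I,
        show ((1 + c - q * lam) / 2) ^ 2 + (W / 2) ^ 2 = c * (1 - δ * lam) from habs]
  · -- Case I₃ : λ‡ ≤ lam
    intro h
    have hql : (sa + sv) ^ 2 ≤ q ^ 2 * lam := by
      rw [hddag, div_le_iff₀ (show (0:ℝ) < q ^ 2 by positivity)] at h; linarith
    have hD0 : 0 ≤ (1 + c - q * lam) ^ 2 - 4 * c * (1 - δ * lam) := by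
      have h1 : 0 ≤ q ^ 2 * lam - (sa - sv) ^ 2 := by
        nlinarith [mul_nonneg hsa0 hsv0]
      have h2 : 0 ≤ q ^ 2 * lam - (sa + sv) ^ 2 := by linarith
      nlinarith [hfac, mul_nonneg h1 h2, pow_pos hq 2]
    set S : ℝ := Real.sqrt ((1 + c - q * lam) ^ 2 - 4 * c * (1 - δ * lam)) with hS_def
    have hS2 : S ^ 2 = (1 + c - q * lam) ^ 2 - 4 * c * (1 - δ * lam) := Real.sq_sqrt hD0
    have hS0 : 0 ≤ S := Real.sqrt_nonneg _
    have e1 : eig1 c δ q lam = (((1 + c - q * lam - S) / 2 : ℝ) : ℂ) := by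
      rw [eig1, cpow_half_of_nonneg hD0, ← hS_def]; push_cast; ring
    have e2 : eig2 c δ q lam = (((1 + c - q * lam + S) / 2 : ℝ) : ℂ) := by
      rw [eig2, cpow_half_of_nonneg hD0, ← hS_def]; push_cast; ring
    refine ⟨by simp [e1], by simp [e2], by simp [e1, e2]; linarith, ?_⟩
    have hT0 : 0 ≤ 2 * c * δ - q * (1 + c) + q ^ 2 * lam := by
      nlinarith [hql, hexp, mul_nonneg hsa0 hsv0]
    have hTS : S * q ≤ 2 * c * δ - q * (1 + c) + q ^ 2 * lam := by
      have hid : (2 * c * δ - q * (1 + c) + q ^ 2 * lam) ^ 2 - (S * q) ^ 2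
          = 4 * ((q - c * δ) * (c * (q - δ))) := by
        linear_combination (-(q ^ 2)) * hS2
      have hsq : (S * q) ^ 2 ≤ (2 * c * δ - q * (1 + c) + q ^ 2 * lam) ^ 2 := by
        nlinarith [hid, mul_nonneg hu.le hv]
      have := Real.sqrt_le_sqrt hsq
      rwa [Real.sqrt_sq (by positivity), Real.sqrt_sq hT0] at this
    rw [e2, Complex.ofReal_re,
      div_le_div_iff₀ (show (0:ℝ) < 2 by norm_num) hq]
    nlinarith [hTS]

end
end

section
/- Let c ∈ [0,1), 0 < δ ≤ q, and λ ≥ 0 with δλ ≤ 1 and qλ ≤ 1+c. Then for every nonnegative integer k, the second coordinate of A(λ)^k · (1,1)ᵀ satisfies |(A(λ)^k (1,1)ᵀ)_2| ≤ 1 when λ ∈ I₁ ∪ I₃ and |(A(λ)^k (1,1)ᵀ)_2| ≤ 2 when λ ∈ I₂, where A(λ) = [[0, 1−δλ],[−c, 1+c−qλ]]. -/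
open Matrix Real

noncomputable section

def xs (s p x1 : ℝ) : ℕ → ℝ
  | 0 => 1
  | 1 => x1
  | (n+2) => s * xs s p x1 (n+1) - p * xs s p x1 n

lemma two_step {P : ℕ → Prop} (h0 : P 0) (h1 : P 1)
    (hstep : ∀ n, P n → P (n+1) → P (n+2)) : ∀ n, P n := by
  have key : ∀ n, P n ∧ P (n+1) := by
    intro n
    induction n with
    | zero => exact ⟨h0, h1⟩
    | succ m ih => exact ⟨ih.2, hstep m ih.1 ih.2⟩
  exact fun n => (key n).1

lemma amat_mulVec (c δ q lam a b : ℝ) :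
    (Amat c δ q lam).mulVec ![a, b] = ![(1 - δ*lam) * b, -c * a + (1+c-q*lam) * b] := by
  funext i
  fin_cases i <;>
    simp [Amat, Matrix.mulVec, dotProduct, Fin.sum_univ_two] <;> ring

lemma amat_pow_mulVec (c δ q lam : ℝ) :
    ∀ k : ℕ, (Amat c δ q lam ^ (k+1)).mulVec ![1,1] =
      ![(1 - δ*lam) * xs (1+c-q*lam) (c*(1-δ*lam)) (1-q*lam) k,
        xs (1+c-q*lam) (c*(1-δ*lam)) (1-q*lam) (k+1)] := by
  intro k
  induction k with
  | zero =>
      rw [pow_one, amat_mulVec]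
      simp [xs]
      ring
  | succ n ih =>
      rw [pow_succ', ← Matrix.mulVec_mulVec, ih, amat_mulVec]
      funext i
      fin_cases i <;> simp [xs] <;> ring

lemma amat_coord (c δ q lam : ℝ) (k : ℕ) :
    ((Amat c δ q lam ^ k).mulVec ![1,1]) 1 =
      xs (1+c-q*lam) (c*(1-δ*lam)) (1-q*lam) k := by
  cases k with
  | zero => simp [xs]
  | succ n => rw [amat_pow_mulVec]; rfl


lemma real_bound (s p x1 μ₁ μ₂ ρ : ℝ)
    (hsum : μ₁ + μ₂ = s) (hprod : μ₁ * μ₂ = p)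
    (h20 : 0 ≤ μ₂) (h21 : μ₂ ≤ μ₁) (h11 : μ₁ < 1)
    (hρ : ρ = μ₁ ∨ ρ = μ₂) (hx : |x1 - ρ| ≤ 1 - μ₁) :
    ∀ k, |xs s p x1 k| ≤ 1 := by
  have h10 : 0 ≤ μ₁ := le_trans h20 h21
  set S : ℕ → ℝ := fun n => Nat.rec 0 (fun k Sk => μ₂ * Sk + μ₁^k) n with hS
  have hS0 : S 0 = 0 := rfl
  have hSs : ∀ k, S (k+1) = μ₂ * S k + μ₁ ^ k := fun k => rfl
  have hρ0 : 0 ≤ ρ := by rcases hρ with h | h <;> rw [h] <;> first | exact h10 | exact h20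
  have hρ1 : ρ ≤ μ₁ := by
    rcases hρ with h | h
    · exact h.le
    · exact h.le.trans h21
  have hρroot : ρ^2 = s*ρ - p := by
    rcases hρ with h | h <;> rw [h]
    · linear_combination μ₁ * hsum - hprod
    · linear_combination μ₂ * hsum - hprod
  have hS1 : S 1 = 1 := by have := hSs 0; simpa [hS0] using this
  have hrep : ∀ k, xs s p x1 k = ρ^k + (x1 - ρ) * S k := by
    apply two_step
    · simp [xs, hS0]
    · rw [show xs s p x1 1 = x1 from rfl, hS1]
      ring
    · intro n ih0 ih1
      rw [show xs s p x1 (n+2) = s * xs s p x1 (n+1) - p * xs s p x1 n from rfl,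
        ih0, ih1, hSs (n+1), hSs n]
      rw [pow_succ ρ (n+1), pow_succ ρ n, pow_succ μ₁ n]
      linear_combination (-(ρ^n)) * hρroot + ((x1-ρ) * S n) * (hprod - μ₂ * hsum)
        - ((x1-ρ) * μ₁^n) * hsum
  have hSnn : ∀ k, 0 ≤ S k := by
    intro k
    induction k with
    | zero => simp [hS0]
    | succ n ih =>
        rw [hSs]
        have := pow_nonneg h10 n
        nlinarith
  have hSle : ∀ k, S k * (1 - μ₁) ≤ 1 - μ₁^k := by
    intro k
    induction k with
    | zero => simp [hS0]
    | succ n ih =>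
        rw [hSs, pow_succ]
        have h1 : 0 ≤ μ₁^n := pow_nonneg h10 n
        have h2 : μ₁^n ≤ 1 := pow_le_one₀ h10 h11.le
        nlinarith [hSnn n, mul_nonneg (mul_nonneg (sub_nonneg.2 h21) (hSnn n)) (sub_nonneg.2 h11.le)]
  intro k
  rw [hrep k]
  have h1 : |ρ^k + (x1 - ρ) * S k| ≤ |ρ^k| + |x1-ρ| * |S k| := by
    calc |ρ^k + (x1 - ρ) * S k| ≤ |ρ^k| + |(x1-ρ) * S k| := abs_add_le _ _
    _ = |ρ^k| + |x1-ρ| * |S k| := by rw [abs_mul]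
  have h2 : |ρ^k| = ρ^k := abs_of_nonneg (pow_nonneg hρ0 k)
  have h3 : |S k| = S k := abs_of_nonneg (hSnn k)
  have h4 : ρ^k ≤ μ₁^k := pow_le_pow_left₀ hρ0 hρ1 k
  have h5 : |x1-ρ| * S k ≤ (1-μ₁) * S k := mul_le_mul_of_nonneg_right hx (hSnn k)
  have h6 := hSle k
  rw [h2, h3] at h1
  nlinarith

lemma cplx_bound (s p x1 : ℝ) (hp0 : 0 < p) (hp1 : p < 1) (hs0 : 0 ≤ s)
    (hdisc : s^2 < 4*p) (hD1 : |x1 - s/2| ≤ 1)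
    (hkey : 2 * |x1 - s/2| * Real.sqrt p ≤ Real.sqrt (4*p - s^2) ∨ Real.sqrt p ≤ 1/2 ∨
      |x1 - s/2| ≤ Real.exp 1 * Real.sqrt p * (1 - Real.sqrt p)) :
    ∀ k, |xs s p x1 k| ≤ 2 := by
  set r := Real.sqrt p with hrdef
  set b := Real.sqrt (4*p - s^2) with hbdef
  have hr0 : 0 < r := Real.sqrt_pos.2 hp0
  have hrsq : r^2 = p := Real.sq_sqrt hp0.le
  have hr1 : r < 1 := by nlinarith
  have hb0 : 0 < b := Real.sqrt_pos.2 (by linarith)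
  have hbsq : b^2 = 4*p - s^2 := Real.sq_sqrt (by linarith)
  set μ : ℂ := ⟨s/2, b/2⟩ with hμ
  set ν : ℂ := ⟨s/2, -(b/2)⟩ with hν
  have hsum : μ + ν = (s:ℂ) := by
    apply Complex.ext <;> simp [hμ, hν]
  have hprod : μ * ν = (p:ℂ) := by
    apply Complex.ext
    · simp [hμ, hν, Complex.mul_re]; nlinarith
    · simp [hμ, hν, Complex.mul_im]; ring
  have habsμ : ‖μ‖ = r := by
    rw [Complex.norm_def, Complex.normSq_mk]
    rw [show s/2 * (s/2) + b/2 * (b/2) = p by nlinarith]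
  have habsν : ‖ν‖ = r := by
    rw [Complex.norm_def, Complex.normSq_mk]
    rw [show s/2 * (s/2) + -(b/2) * -(b/2) = p by nlinarith]
  have hμroot : μ^2 = s*μ - p := by linear_combination μ * hsum - hprod
  have hνroot : ν^2 = s*ν - p := by linear_combination ν * hsum - hprod
  set γ : ℂ := (x1 : ℂ) - (s:ℂ)/2 with hγ
  have habsγ : ‖γ‖ = |x1 - s/2| := by
    rw [hγ, show (x1:ℂ) - (s:ℂ)/2 = ((x1 - s/2 : ℝ):ℂ) by push_cast; ring, Complex.norm_real, Real.norm_eq_abs]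
  set S : ℕ → ℂ := fun n => Nat.rec 0 (fun k Sk => ν * Sk + μ^k) n with hS
  have hS0 : S 0 = 0 := rfl
  have hSs : ∀ k, S (k+1) = ν * S k + μ ^ k := fun k => rfl
  have hS1 : S 1 = 1 := by have := hSs 0; simpa [hS0] using this
  have hrep : ∀ k, ((xs s p x1 k : ℝ) : ℂ) = (μ^k + ν^k)/2 + γ * S k := by
    apply two_step
    · simp [xs, hS0]
    · rw [show xs s p x1 1 = x1 from rfl, hS1, hγ]
      rw [pow_one, pow_one, hsum]
      ring
    · intro n ih0 ih1
      rw [show xs s p x1 (n+2) = s * xs s p x1 (n+1) - p * xs s p x1 n from rfl]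
      push_cast
      rw [ih0, ih1, hSs (n+1), hSs n]
      rw [pow_succ μ (n+1), pow_succ ν (n+1), pow_succ μ n, pow_succ ν n]
      linear_combination (-(μ^n)/2) * hμroot + (-(ν^n)/2) * hνroot
        + (γ * S n) * (hprod - ν * hsum) - (γ * μ^n) * hsum
  -- bound 1 : |S (k+1)| ≤ (k+1) r^k
  have hSb1 : ∀ k : ℕ, ‖S (k+1)‖ ≤ (k+1) * r^k := by
    intro k
    induction k with
    | zero => norm_num [hS1]
    | succ n ih =>
        rw [hSs (n+1)]
        calc ‖ν * S (n+1) + μ^(n+1)‖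
            ≤ ‖ν * S (n+1)‖ + ‖μ^(n+1)‖ := norm_add_le _ _
          _ = r * ‖S (n+1)‖ + r^(n+1) := by
              rw [norm_mul, norm_pow, habsμ, habsν]
          _ ≤ r * ((n+1) * r^n) + r^(n+1) := by
              have := mul_le_mul_of_nonneg_left ih hr0.le
              linarith
          _ ≤ (↑(n+1)+1) * r^(n+1) := by
              rw [pow_succ]
              push_cast
              ring_nf
              nlinarith [pow_nonneg hr0.le n]
  -- bound 2 : b * |S k| ≤ 2 r^k
  have hlin : ∀ k, (μ - ν) * S k = μ^k - ν^k := by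
    intro k
    induction k with
    | zero => simp [hS0]
    | succ n ih =>
        rw [hSs n, pow_succ μ n, pow_succ ν n]
        linear_combination ν * ih
  have habsdiff : ‖μ - ν‖ = b := by
    have : μ - ν = ⟨0, b⟩ := by apply Complex.ext <;> simp [hμ, hν] <;> ring
    rw [this, Complex.norm_def, Complex.normSq_mk]
    rw [show (0 * 0 + b * b : ℝ) = b^2 by ring]
    exact Real.sqrt_sq hb0.le
  have hSb2 : ∀ k, b * ‖S k‖ ≤ 2 * r^k := by
    intro k
    have h1 : b * ‖S k‖ = ‖μ^k - ν^k‖ := by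
      rw [← hlin k, norm_mul, habsdiff]
    rw [h1]
    calc ‖μ^k - ν^k‖ ≤ ‖μ^k‖ + ‖ν^k‖ := by
          exact (norm_sub_le _ _)
      _ = 2 * r^k := by rw [norm_pow, norm_pow, habsμ, habsν]; ring
  intro k
  cases k with
  | zero => rw [show xs s p x1 0 = 1 from rfl]; norm_num
  | succ n =>
    have hxabs : |xs s p x1 (n+1)| = ‖((xs s p x1 (n+1) : ℝ) : ℂ)‖ :=
      by rw [Complex.norm_real, Real.norm_eq_abs]
    rw [hxabs, hrep (n+1)]
    set S' := ‖S (n+1)‖ with hS'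
    have hS'0 : 0 ≤ S' := norm_nonneg _
    set D := |x1 - s/2| with hDdef
    have hD0 : 0 ≤ D := abs_nonneg _
    have hrn1 : r^(n+1) ≤ 1 := pow_le_one₀ hr0.le hr1.le
    have hgoal : D * S' ≤ 1 := by
      rcases hkey with hk | hk | hk
      · have h2 := hSb2 (n+1)
        have hrn : r^n ≤ 1 := pow_le_one₀ hr0.le hr1.le
        have hbound : b * (D * S') ≤ b * 1 := by
          calc b * (D * S') = D * (b * S') := by ring
            _ ≤ D * (2*r^(n+1)) := mul_le_mul_of_nonneg_left h2 hD0
            _ = (2*D*r) * r^n := by rw [pow_succ]; ring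
            _ ≤ b * r^n := mul_le_mul_of_nonneg_right hk (pow_nonneg hr0.le n)
            _ ≤ b * 1 := mul_le_mul_of_nonneg_left hrn hb0.le
        exact le_of_mul_le_mul_left hbound hb0
      · have h2 := hSb1 n
        have hn : ((n:ℝ)+1) ≤ 2^n := by
          exact_mod_cast Nat.succ_le_of_lt (Nat.lt_two_pow_self (n := n))
        have h3 : ((n:ℝ)+1) * r^n ≤ 1 := by
          calc ((n:ℝ)+1) * r^n ≤ 2^n * r^n :=
                mul_le_mul_of_nonneg_right hn (pow_nonneg hr0.le n)
            _ = (2*r)^n := by rw [mul_pow]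
            _ ≤ 1 := pow_le_one₀ (by positivity) (by linarith)
        have h4 : D * S' ≤ 1 * (((n:ℝ)+1) * r^n) := mul_le_mul hD1 h2 hS'0 zero_le_one
        linarith
      · have h2 := hSb1 n
        set t := -Real.log r with ht
        have ht0 : 0 < t := by
          have := Real.log_neg hr0 hr1
          rw [ht]; linarith
        have hrt : r = Real.exp (-t) := by rw [ht, neg_neg, Real.exp_log hr0]
        have h1r : 1 - r ≤ t := by
          have := Real.log_le_sub_one_of_pos hr0
          rw [ht]; linarith
        have hu : (((n:ℝ)+1) * t) * Real.exp (-(((n:ℝ)+1)*t)) ≤ Real.exp (-1) := by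
          have h3 : ((n:ℝ)+1)*t ≤ Real.exp (((n:ℝ)+1)*t - 1) := by
            have := Real.add_one_le_exp (((n:ℝ)+1)*t - 1); linarith
          calc (((n:ℝ)+1) * t) * Real.exp (-(((n:ℝ)+1)*t))
              ≤ Real.exp (((n:ℝ)+1)*t - 1) * Real.exp (-(((n:ℝ)+1)*t)) :=
                mul_le_mul_of_nonneg_right h3 (Real.exp_nonneg _)
            _ = Real.exp (-1) := by rw [← Real.exp_add]; ring_nf
        have hrpow : r^(n+1) = Real.exp (-(((n:ℝ)+1)*t)) := by
          rw [hrt, ← Real.exp_nat_mul]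
          congr 1
          push_cast
          ring
        have hC : (Real.exp 1 * t) * (((n:ℝ)+1) * r^(n+1)) ≤ 1 := by
          rw [hrpow]
          have h5 := mul_le_mul_of_nonneg_left hu (Real.exp_nonneg 1)
          have he : Real.exp 1 * Real.exp (-1) = 1 := by
            rw [← Real.exp_add]; norm_num
          calc (Real.exp 1 * t) * (((n:ℝ)+1) * Real.exp (-(((n:ℝ)+1)*t)))
              = Real.exp 1 * ((((n:ℝ)+1) * t) * Real.exp (-(((n:ℝ)+1)*t))) := by ring
            _ ≤ Real.exp 1 * Real.exp (-1) := h5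
            _ = 1 := he
        calc D * S' ≤ D * (((n:ℝ)+1)*r^n) := mul_le_mul_of_nonneg_left h2 hD0
          _ ≤ (Real.exp 1*r*(1-r)) * (((n:ℝ)+1)*r^n) :=
              mul_le_mul_of_nonneg_right hk (by positivity)
          _ = (Real.exp 1*(1-r)) * (((n:ℝ)+1)*r^(n+1)) := by rw [pow_succ]; ring
          _ ≤ (Real.exp 1*t) * (((n:ℝ)+1)*r^(n+1)) := by
              have h6 : Real.exp 1*(1-r) ≤ Real.exp 1*t :=
                mul_le_mul_of_nonneg_left h1r (Real.exp_nonneg 1)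
              exact mul_le_mul_of_nonneg_right h6 (by positivity)
          _ ≤ 1 := hC
    have hA : ‖(μ^(n+1) + ν^(n+1))/2‖ ≤ r^(n+1) := by
      rw [norm_div, Complex.norm_two]
      have h7 := norm_add_le (μ^(n+1)) (ν^(n+1))
      rw [norm_pow, norm_pow, habsμ, habsν] at h7
      linarith
    have hB : ‖γ * S (n+1)‖ = D * S' := by
      rw [norm_mul, habsγ]
    calc ‖(μ^(n+1) + ν^(n+1))/2 + γ * S (n+1)‖
        ≤ ‖(μ^(n+1) + ν^(n+1))/2‖ + ‖γ * S (n+1)‖ :=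
          norm_add_le _ _
      _ ≤ r^(n+1) + D * S' := by rw [hB]; linarith
      _ ≤ 2 := by linarith



lemma xs_one (s p : ℝ) (h : s - p = 1) : ∀ k, xs s p 1 k = 1 := by
  apply two_step
  · rfl
  · rfl
  · intro n ih0 ih1
    rw [show xs s p 1 (n+2) = s * xs s p 1 (n+1) - p * xs s p 1 n from rfl, ih0, ih1]
    linarith

lemma disc_fact (c δ q : ℝ) (hc0 : 0 ≤ c) (hc1 : c < 1) (hδ : 0 < δ) (hδq : δ ≤ q) :
    lamDagger c δ q ≤ lamDDagger c δ q ∧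
    ∀ lam : ℝ, (1+c-q*lam)^2 - 4*(c*(1-δ*lam)) =
      q^2 * ((lam - lamDagger c δ q) * (lam - lamDDagger c δ q)) := by
  have hq0 : 0 < q := lt_of_lt_of_le hδ hδq
  set α := Real.sqrt (q - c * δ) with hα
  set β := Real.sqrt (c * (q - δ)) with hβ
  have hqcδ : 0 < q - c * δ := by nlinarith
  have hcqδ : 0 ≤ c * (q - δ) := mul_nonneg hc0 (by linarith)
  have hα2 : α^2 = q - c*δ := Real.sq_sqrt hqcδ.le
  have hβ2 : β^2 = c*(q-δ) := Real.sq_sqrt hcqδ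
  have hα0 : 0 < α := Real.sqrt_pos.2 hqcδ
  have hβ0 : 0 ≤ β := Real.sqrt_nonneg _
  have hβα : β < α := by nlinarith
  have hA0 : 0 < α + β := by linarith
  have hB0 : 0 < α - β := by linarith
  have hprodAB : (α+β) * (α-β) = q*(1-c) := by linear_combination hα2 - hβ2
  have hAB2 : (α+β)^2 * (α-β)^2 = q^2*(1-c)^2 := by
    linear_combination ((α+β)*(α-β) + q*(1-c)) * hprodAB
  have hsum2 : (α+β)^2 + (α-β)^2 = 2*(q*(1+c) - 2*(c*δ)) := by
    linear_combination 2*hα2 + 2*hβ2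
  have hd1 : lamDagger c δ q = (1-c)^2/(α+β)^2 := rfl
  have hd2 : lamDDagger c δ q = (1-c)^2/(α-β)^2 := rfl
  have hApos : (0:ℝ) < (α+β)^2 := by positivity
  have hBpos : (0:ℝ) < (α-β)^2 := by positivity
  have h1c : ((1:ℝ)-c)^2 ≠ 0 := by
    have : (0:ℝ) < (1-c)^2 := by nlinarith
    exact ne_of_gt this
  constructor
  · rw [hd1, hd2]
    apply div_le_div_of_nonneg_left (sq_nonneg _) hBpos
    nlinarith
  · have hd_prod : lamDagger c δ q * lamDDagger c δ q = (1-c)^2/q^2 := by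
      rw [hd1, hd2, div_mul_div_comm, hAB2, mul_comm (q^2), mul_div_mul_left _ _ h1c]
    have hd_sum : lamDagger c δ q + lamDDagger c δ q = (2*(q*(1+c) - 2*(c*δ)))/q^2 := by
      rw [hd1, hd2, div_add_div _ _ (ne_of_gt hApos) (ne_of_gt hBpos), hAB2]
      rw [div_eq_div_iff (by positivity) (by positivity)]
      linear_combination ((1-c)^2*q^2) * hsum2
    intro lam
    have h1 : (lamDagger c δ q + lamDDagger c δ q) * q^2 = 2*(q*(1+c) - 2*(c*δ)) := by
      rw [hd_sum]; field_simp
    have h2 : (lamDagger c δ q * lamDDagger c δ q) * q^2 = (1-c)^2 := by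
      rw [hd_prod]; field_simp
    linear_combination lam * h1 - h2


lemma tech1 (D r e : ℝ) (he : 2.718 ≤ e) (hr : 1/2 ≤ r) (hr1 : r ≤ 1)
    (hD : D ≤ (1-r^2)/2) : D ≤ e*r*(1-r) := by
  nlinarith [mul_nonneg (by linarith : (0:ℝ) ≤ 1-r) (by nlinarith : (0:ℝ) ≤ e*r - (1+r)/2)]

lemma tech2 (D r e : ℝ) (he : 2.718 ≤ e) (hr : 1/2 ≤ r) (hr1 : r ≤ 1) (hD0 : 0 ≤ D)
    (hkey : D*(1+r^2) ≤ 1-r^2) : D ≤ e*r*(1-r) := by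
  have h1 : (0:ℝ) ≤ 1-r := by linarith
  have h2 : (0:ℝ) ≤ e*r*(1+r^2) - (1+r) := by
    nlinarith [sq_nonneg (2*r-1), mul_nonneg (by linarith : (0:ℝ) ≤ r - 1/2) (sq_nonneg (2*r-1))]
  have h4 : (0:ℝ) < 1 + r^2 := by positivity
  have h3 : D*(1+r^2) ≤ (e*r*(1-r))*(1+r^2) := by nlinarith [mul_nonneg h1 h2]
  exact le_of_mul_le_mul_right h3 h4

lemma tech3 (c D p r e : ℝ) (he : 2.718 ≤ e) (hr : 1/2 ≤ r) (hrle : r ≤ 1)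
    (hD0 : 0 ≤ D) (hcD0 : 0 ≤ c - D) (hc1 : c < 1) (hp0 : 0 < p) (hrsq : r^2 = p)
    (hH : 4*p*(1-D^2) < 4*(c-D)^2) : D ≤ e*r*(1-r) := by
  have hDc : D ≤ c := by linarith
  have hD1' : D < 1 := by linarith
  have h3 : (c-D)^2 ≤ (1-D)^2 := by nlinarith
  have h6 : (p*(1+D))*(1-D) < (1-D)*(1-D) := by nlinarith
  have h5 : 0 < 1 - D := by linarith
  have h11 : p*(1+D) < 1-D := lt_of_mul_lt_mul_right (by linarith) h5.le
  have hkeyD : D*(1+r^2) ≤ 1-r^2 := by rw [hrsq]; nlinarith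
  exact tech2 D r e he hr hrle hD0 hkeyD


set_option maxHeartbeats 1000000 in
/-- If `δλ ≤ 1` and `qλ ≤ 1+c`, then for every `k ∈ ℕ` the second
coordinate of `A(λ)^k · (1,1)ᵀ` is bounded by `1` in absolute value on `I₁ ∪ I₃`
and by `2` on `I₂`. -/
theorem momentum_matrix_pow_bias_coord_bound
    (c δ q lam : ℝ) (hc0 : 0 ≤ c) (hc1 : c < 1) (hδ : 0 < δ) (hδq : δ ≤ q)
    (hlam : 0 ≤ lam) (hδlam : δ * lam ≤ 1) (hqlam : q * lam ≤ 1 + c) (k : ℕ) :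
    ((lam ≤ lamDagger c δ q ∨ lamDDagger c δ q ≤ lam) →
      |((Amat c δ q lam ^ k).mulVec ![1, 1]) 1| ≤ 1) ∧
    ((lamDagger c δ q < lam ∧ lam < lamDDagger c δ q) →
      |((Amat c δ q lam ^ k).mulVec ![1, 1]) 1| ≤ 2) := by
  have hq0 : 0 < q := lt_of_lt_of_le hδ hδq
  have hql0 : 0 ≤ q * lam := mul_nonneg hq0.le hlam
  have hdl0 : 0 ≤ δ * lam := mul_nonneg hδ.le hlam
  obtain ⟨hord, hfact⟩ := disc_fact c δ q hc0 hc1 hδ hδq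
  rw [amat_coord]
  set s := 1 + c - q*lam with hs
  set p := c*(1-δ*lam) with hp
  set x1 := 1 - q*lam with hx1
  have hs0 : 0 ≤ s := by rw [hs]; linarith
  have hp0 : 0 ≤ p := by rw [hp]; nlinarith
  have hplec : p ≤ c := by rw [hp]; nlinarith
  have hfl := hfact lam
  clear_value s p x1
  constructor
  · -- real case
    intro hreg
    rcases eq_or_lt_of_le hlam with h0 | h0
    · -- lam = 0
      have hly : lam = 0 := h0.symm
      subst hly
      have hsv : s = 1 + c := by rw [hs]; ring
      have hpv : p = c := by rw [hp]; ring
      have hxv : x1 = 1 := by rw [hx1]; ring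
      rw [hsv, hpv, hxv, xs_one (1+c) c (by ring) k]
      norm_num
    · -- lam > 0
      have hd : 0 ≤ s^2 - 4*p := by
        rw [hs, hp]
        rw [show (1+c-q*lam)^2 - 4*(c*(1-δ*lam)) =
          q^2*((lam - lamDagger c δ q)*(lam - lamDDagger c δ q)) from hfl]
        rcases hreg with h | h
        · have h1 : lam - lamDagger c δ q ≤ 0 := by linarith
          have h2 : lam - lamDDagger c δ q ≤ 0 := by linarith
          have h3 : 0 ≤ (lam - lamDagger c δ q) * (lam - lamDDagger c δ q) := by
            nlinarith [mul_nonneg (neg_nonneg.2 h1) (neg_nonneg.2 h2)]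
          exact mul_nonneg (sq_nonneg q) h3
        · have h1 : 0 ≤ lam - lamDagger c δ q := by linarith
          have h2 : 0 ≤ lam - lamDDagger c δ q := by linarith
          exact mul_nonneg (sq_nonneg q) (mul_nonneg h1 h2)
      clear hfact hfl hord hreg
      set d := s^2 - 4*p with hdd
      clear_value d
      set sd := Real.sqrt d with hsd
      have hsd0 : 0 ≤ sd := Real.sqrt_nonneg _
      have hsd2 : sd^2 = d := Real.sq_sqrt hd
      have hsds : sd ≤ s := by
        rw [hsd, show s = Real.sqrt (s^2) from (Real.sqrt_sq hs0).symm]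
        apply Real.sqrt_le_sqrt
        nlinarith
      have hslt2 : s < 2 := by rw [hs]; linarith
      have hqcd : 0 < q - c*δ := by nlinarith
      have hsdlt : sd < 2 - s := by
        rw [hsd]
        rw [show (2:ℝ) - s = Real.sqrt ((2-s)^2) from (Real.sqrt_sq (by linarith)).symm]
        apply Real.sqrt_lt_sqrt hd
        have : (2-s)^2 - d = 4*(lam*(q-c*δ)) := by rw [hdd, hs, hp]; ring
        nlinarith [mul_pos h0 hqcd]
      clear_value sd
      set μ₁ := (s + sd)/2 with hμ₁
      set μ₂ := (s - sd)/2 with hμ₂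
      clear_value μ₁ μ₂
      have hsum : μ₁ + μ₂ = s := by rw [hμ₁, hμ₂]; ring
      have hprod : μ₁ * μ₂ = p := by
        rw [hμ₁, hμ₂]
        linear_combination (-(1:ℝ)/4) * hsd2 + (-(1:ℝ)/4) * hdd
      have h20 : 0 ≤ μ₂ := by rw [hμ₂]; linarith
      have h21 : μ₂ ≤ μ₁ := by rw [hμ₁, hμ₂]; linarith
      have h11 : μ₁ < 1 := by rw [hμ₁]; linarith
      have hE : (x1 - μ₁) * (x1 - μ₂) = c*lam*(q-δ) := by
        rw [hμ₁, hμ₂, hx1, hs]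
        have hd2' : sd^2 = (1+c-q*lam)^2 - 4*(c*(1-δ*lam)) := by rw [hsd2, hdd, hs, hp]
        linear_combination (-(1:ℝ)/4) * hd2'
      have hE0 : 0 ≤ c*lam*(q-δ) := mul_nonneg (mul_nonneg hc0 hlam) (by linarith)
      have hx1le : x1 ≤ 1 := by rw [hx1]; linarith
      rcases le_or_gt μ₁ x1 with hcase | hcase
      · apply real_bound s p x1 μ₁ μ₂ μ₁ hsum hprod h20 h21 h11 (Or.inl rfl)
        rw [abs_of_nonneg (by linarith)]
        linarith
      · have hcase2 : x1 ≤ μ₂ := by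
          by_contra hcon
          push_neg at hcon
          have h5 : 0 < (μ₁ - x1) * (x1 - μ₂) := mul_pos (by linarith) (by linarith)
          nlinarith [hE, hE0, h5]
        apply real_bound s p x1 μ₁ μ₂ μ₂ hsum hprod h20 h21 h11 (Or.inr rfl)
        rw [abs_of_nonpos (by linarith)]
        have : μ₁ + μ₂ = s := hsum
        rw [hs] at this
        rw [hx1]
        linarith
  · -- complex case
    intro ⟨hr1, hr2⟩
    have hdneg : s^2 - 4*p < 0 := by
      rw [hs, hp]
      rw [show (1+c-q*lam)^2 - 4*(c*(1-δ*lam)) =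
        q^2*((lam - lamDagger c δ q)*(lam - lamDDagger c δ q)) from hfl]
      have h1 : 0 < lam - lamDagger c δ q := by linarith
      have h2 : lam - lamDDagger c δ q < 0 := by linarith
      have hq2 : 0 < q^2 := by positivity
      have h3 : (lam - lamDagger c δ q) * (lam - lamDDagger c δ q) < 0 := by
        nlinarith [mul_pos h1 (neg_pos.2 h2)]
      exact mul_neg_of_pos_of_neg hq2 h3
    clear hfact hfl hord
    have hp0' : 0 < p := by nlinarith [sq_nonneg s]
    have hp1 : p < 1 := lt_of_le_of_lt hplec hc1
    have hdisc : s^2 < 4*p := by linarith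
    have hxs : x1 - s/2 = (1-c-q*lam)/2 := by rw [hx1, hs]; ring
    have hD1 : |x1 - s/2| ≤ 1 := by
      rw [hxs, abs_le]
      constructor <;> nlinarith
    apply cplx_bound s p x1 hp0' hp1 hs0 hdisc hD1 _ k
    -- the key disjunction
    set r := Real.sqrt p with hrr
    set b := Real.sqrt (4*p - s^2) with hbb
    by_cases hhalf : r ≤ 1/2
    · exact Or.inr (Or.inl hhalf)
    by_cases hbig : 2 * |x1 - s/2| * r ≤ b
    · exact Or.inl hbig
    refine Or.inr (Or.inr ?_)
    push_neg at hhalf hbig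
    set D := |x1 - s/2| with hDD
    have hD0 : 0 ≤ D := abs_nonneg _
    have hr0 : 0 < r := Real.sqrt_pos.2 hp0'
    have hrsq : r^2 = p := Real.sq_sqrt hp0'.le
    have hb0 : 0 ≤ b := Real.sqrt_nonneg _
    have hbsq : b^2 = 4*p - s^2 := Real.sq_sqrt (by linarith)
    clear_value r b D
    have hrnn : 0 ≤ r := hr0.le
    have hrlt1 : r < 1 := by nlinarith
    have he : (2.718:ℝ) ≤ Real.exp 1 := by
      have := Real.exp_one_gt_d9
      linarith
    have hH : 4*p*(1 - D^2) < s^2 := by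
      have h8 : 0 < 2*D*r + b := by
        have : 0 < 2*D*r := lt_of_le_of_lt hb0 hbig
        linarith
      have h7 : D^2*r^2 = D^2*p := by rw [hrsq]
      nlinarith [mul_pos (sub_pos.2 hbig) h8, hbsq, h7]
    rcases le_total (q*lam) (1-c) with hcs | hcs
    · have hDval : D = (1-c-q*lam)/2 := by
        rw [hDD, hxs]
        exact abs_of_nonneg (by linarith)
      have hDle : D ≤ (1-r^2)/2 := by
        rw [hDval, hrsq, hp]
        nlinarith
      exact tech1 D r (Real.exp 1) he hhalf.le hrlt1.le hDle
    · have hDval : D = (q*lam-(1-c))/2 := by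
        rw [hDD, hxs, show (1-c-q*lam)/2 = -((q*lam-(1-c))/2) by ring]
        rw [abs_neg]
        exact abs_of_nonneg (by linarith)
      have hsD : s = 2*(c - D) := by rw [hDval, hs]; ring
      have hcD0 : 0 ≤ c - D := by linarith [hs0, hsD]
      have h9 : 4*(c-D)^2 = s^2 := by rw [hsD]; ring
      have hH2 : 4*p*(1-D^2) < 4*(c-D)^2 := by linarith
      exact tech3 c D p r (Real.exp 1) he hhalf.le hrlt1.le hD0 hcD0 hc1 hp0' hrsq hH2


end
end

section
/- Let c ∈ [0,1), 0 ≤ δ ≤ q with q > cδ, and let P = [[1, −1],[1, −c]] with inverse P^{-1} = (1/(1−c))·[[−c, 1],[−1, 1]]. Then for every λ with 0 ≤ λ ≤ (1−c)²/(q−cδ), the matrix A(λ) = [[0, 1−δλ],[−c, 1+c−qλ]] satisfies ‖P^{-1} A(λ) P‖ ≤ 1, where ‖·‖ is the spectral norm. -/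
open Matrix Real

noncomputable section

/-- The change-of-basis matrix `P = [[1, −1], [1, −c]]`. -/
def Pmat (c : ℝ) : Matrix (Fin 2) (Fin 2) ℝ := !![1, -1; 1, -c]

/-- Its inverse `P⁻¹ = (1/(1−c))·[[−c, 1], [−1, 1]]`. -/
def PmatInv (c : ℝ) : Matrix (Fin 2) (Fin 2) ℝ := (1 / (1 - c)) • !![-c, 1; -1, 1]

/-- The matrix spectral (operator 2-) norm. -/
def specNorm {d : ℕ} (A : Matrix (Fin d) (Fin d) ℝ) : ℝ :=
  ‖Matrix.toEuclideanCLM (𝕜 := ℝ) A‖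

lemma sqAC (c u v : ℝ) (hc : 0 ≤ c) (hv : 0 ≤ v) (hvu : v ≤ u) (hu : u + c ≤ 1) :
    (c*(v+v^2-u+u^2))^2 ≤ (2*u-u^2-v^2) * (1 - c^2*u^2 - c^2*(1+v)^2) := by
  have hu0 : 0 ≤ u := hv.trans hvu
  have hu1 : u ≤ 1 := by linarith
  have hA : 0 ≤ 2*u - u^2 - v^2 := by
    nlinarith [mul_self_le_mul_self hv hvu, mul_nonneg hu0 (sub_nonneg.2 hu1)]
  have hq : 0 ≤ 3 - 4*u + 2*u^2 := by nlinarith [sq_nonneg (u-1)]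
  have hlin : 0 ≤ 4*u - (u-v) - 4*u^2 + 2*u^3 := by nlinarith [mul_nonneg hu0 hq]
  have ha : 0 ≤ (u-v) * (4*u - (u-v) - 4*u^2 + 2*u^3) := mul_nonneg (by linarith) hlin
  have hb : 0 ≤ 2*u^3*(1-u) := mul_nonneg (by positivity) (by linarith)
  have hK : 0 ≤ (2*u-u^2-v^2)*(1+2*v+u^2+v^2) + (u^2+v^2-(u-v))^2 := by
    have : 0 ≤ (1:ℝ)+2*v+u^2+v^2 := by positivity
    nlinarith [mul_nonneg hA this]
  have hcs : 0 ≤ ((1-u)^2 - c^2) * ((2*u-u^2-v^2)*(1+2*v+u^2+v^2) + (u^2+v^2-(u-v))^2) := by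
    apply mul_nonneg _ hK
    nlinarith [mul_nonneg hc hc]
  nlinarith [ha, hb, hcs]

lemma Cpos (c u v : ℝ) (hc : 0 ≤ c) (hc1 : c < 1) (hv : 0 ≤ v) (hvu : v ≤ u) (hu : u + c ≤ 1) :
    0 < 1 - c^2*u^2 - c^2*(1+v)^2 := by
  have hu0 : 0 ≤ u := hv.trans hvu
  rcases eq_or_lt_of_le hu0 with h | h
  · have hv0 : v = 0 := le_antisymm (h ▸ hvu) hv
    subst hv0; rw [← h]; nlinarith [mul_self_le_mul_self hc hc1.le]
  · have h1 : c*u ≤ (1-u)*u := mul_le_mul_of_nonneg_right (by linarith) hu0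
    have h2 : c*(1+v) ≤ 1 - u^2 := by nlinarith [mul_le_mul_of_nonneg_left hvu hc]
    have h3 : 0 ≤ c*u := mul_nonneg hc hu0
    have h4 : 0 ≤ c*(1+v) := mul_nonneg hc (by linarith)
    nlinarith [mul_self_le_mul_self h3 h1, mul_self_le_mul_self h4 h2, mul_pos h h,
      mul_pos (mul_pos h h) h, mul_pos (mul_pos (mul_pos h h) h) h]

lemma quadForm (c u v x y : ℝ) (hc : 0 ≤ c) (hc1 : c < 1) (hv : 0 ≤ v) (hvu : v ≤ u)
    (hu : u + c ≤ 1) :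
    ((1-u)*x + c*u*y)^2 + (-(v*x) + c*(1+v)*y)^2 ≤ x^2 + y^2 := by
  have hC := Cpos c u v hc hc1 hv hvu hu
  have hD := sqAC c u v hc hv hvu hu
  have hCQ : 0 ≤ (1 - c^2*u^2 - c^2*(1+v)^2) *
      (x^2 + y^2 - (((1-u)*x + c*u*y)^2 + (-(v*x) + c*(1+v)*y)^2)) := by
    nlinarith [sq_nonneg ((c*(v+v^2-u+u^2))*x + (1 - c^2*u^2 - c^2*(1+v)^2)*y),
      mul_nonneg (sub_nonneg.2 hD) (sq_nonneg x)]
  nlinarith [(mul_nonneg_iff_of_pos_left hC).mp hCQ]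

lemma matrix_eq (c δ q lam : ℝ) (hc1 : c < 1) :
    PmatInv c * Amat c δ q lam * Pmat c =
      !![1 - lam*(q-c*δ)/(1-c), c*(lam*(q-c*δ)/(1-c));
         -(lam*(q-δ)/(1-c)), c*(1 + lam*(q-δ)/(1-c))] := by
  have h : (1:ℝ) - c ≠ 0 := by intro h; linarith [h]
  ext i j
  fin_cases i <;> fin_cases j <;>
    simp [PmatInv, Amat, Pmat, Matrix.mul_apply, Fin.sum_univ_two] <;>
    field_simp <;> ring

/-- For `c ∈ [0,1)`, `0 ≤ δ ≤ q` with `q > cδ`, and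
`0 ≤ λ ≤ (1−c)²/(q−cδ)`, one has `‖P⁻¹ A(λ) P‖ ≤ 1`. -/
theorem transformed_momentum_matrix_norm_le_one
    (c δ q lam : ℝ) (hc0 : 0 ≤ c) (hc1 : c < 1) (hδ : 0 ≤ δ) (hδq : δ ≤ q)
    (hqcδ : c * δ < q) (hlam0 : 0 ≤ lam) (hlam1 : lam ≤ (1 - c) ^ 2 / (q - c * δ)) :
    specNorm (PmatInv c * Amat c δ q lam * Pmat c) ≤ 1 := by
  set u : ℝ := lam*(q-c*δ)/(1-c) with hu_def
  set v : ℝ := lam*(q-δ)/(1-c) with hv_def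
  have h1c : (0:ℝ) < 1 - c := by linarith
  have hqc : (0:ℝ) < q - c*δ := by linarith
  have hv0 : 0 ≤ v := div_nonneg (mul_nonneg hlam0 (by linarith)) h1c.le
  have hvu : v ≤ u := by
    rw [hv_def, hu_def, div_le_div_iff₀ h1c h1c]
    nlinarith [mul_nonneg (mul_nonneg hlam0 hδ) (sq_nonneg (1-c))]
  have huc : u + c ≤ 1 := by
    have h5 : lam*(q-c*δ) ≤ (1-c)^2 := (le_div_iff₀ hqc).mp hlam1
    have : u ≤ 1 - c := by rw [hu_def, div_le_iff₀ h1c]; nlinarith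
    linarith
  rw [matrix_eq c δ q lam hc1]
  unfold specNorm
  apply ContinuousLinearMap.opNorm_le_bound _ zero_le_one
  intro x
  rw [one_mul]
  have hx : Matrix.toEuclideanCLM (𝕜 := ℝ)
        (!![1 - u, c*u; -v, c*(1+v)]) x =
      (WithLp.equiv _ _).symm ((!![1 - u, c*u; -v, c*(1+v)]).mulVec x) := rfl
  rw [hx, EuclideanSpace.norm_eq, EuclideanSpace.norm_eq]
  apply Real.sqrt_le_sqrt
  rw [Fin.sum_univ_two, Fin.sum_univ_two]
  simp only [WithLp.equiv_symm_apply, WithLp.ofLp_toLp, Matrix.mulVec, dotProduct, Fin.sum_univ_two,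
    Real.norm_eq_abs, sq_abs, Matrix.of_apply, Matrix.cons_val_zero, Matrix.cons_val_one, Matrix.head_cons, Matrix.cons_val', Matrix.empty_val',
    Matrix.head_fin_const]
  have key := quadForm c u v (x 0) (x 1) hc0 hc1 hv0 hvu huc
  nlinarith [key]

end
end

section
/- Let S = diag(λ_1,…,λ_d), M = diag(m_1,…,m_d) and R = diag(r_1,…,r_d) with λ_i, m_i > 0 and r_i ≥ 0, let σ² > 0 and n a positive integer, and put S' = M^{-1/2} S M^{-1/2} = diag(λ_i/m_i), R' = M^{-1/2} R M^{-1/2} = diag(r_i/m_i). Then min over A ∈ ℝ^{d×d} of (1/π²)·‖(I−A)ᵀ R' (I−A)‖ + (σ²/n)·⟨R', A (S')^{-1} Aᵀ⟩ equals min over τ ≥ 0 of τ²/π² + Σ_{i ∈ 𝕂_τ} (1 − τ√(m_i/r_i))² · σ² r_i/(n λ_i), where 𝕂_τ = {k : r_k/m_k > τ²}; and this common value is at least (1/4) · min over τ ≥ 0 of τ²/π² + Σ_{i ∈ 𝕂_τ} σ² r_i/(n λ_i). -/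
set_option maxHeartbeats 1000000

open Matrix Real

noncomputable section

/-- The trace inner product `⟨A, B⟩ = tr (Aᵀ B)`. -/
def traceInner {d : ℕ} (A B : Matrix (Fin d) (Fin d) ℝ) : ℝ := (Aᵀ * B).trace

lemma specNorm_diagonal_le {d : ℕ} (v : Fin d → ℝ) (c : ℝ) (hc : 0 ≤ c)
    (h : ∀ i, |v i| ≤ c) : specNorm (Matrix.diagonal v) ≤ c := by
  apply ContinuousLinearMap.opNorm_le_bound _ hc
  intro x
  have hx : x = (WithLp.equiv 2 (Fin d → ℝ)).symm (WithLp.equiv 2 (Fin d → ℝ) x) := rfl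
  rw [hx, show (Matrix.toEuclideanCLM (𝕜 := ℝ) (Matrix.diagonal v)) ((WithLp.equiv 2 (Fin d → ℝ)).symm ((WithLp.equiv 2 (Fin d → ℝ)) x)) = (WithLp.equiv 2 (Fin d → ℝ)).symm (Matrix.diagonal v *ᵥ (WithLp.equiv 2 (Fin d → ℝ)) x) from rfl]
  rw [EuclideanSpace.norm_eq, EuclideanSpace.norm_eq]
  have key : ∑ i, ‖((WithLp.equiv 2 (Fin d → ℝ)).symm
      (Matrix.diagonal v *ᵥ (WithLp.equiv 2 (Fin d → ℝ)) x)) i‖ ^ 2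
      ≤ c ^ 2 * ∑ i, ‖((WithLp.equiv 2 (Fin d → ℝ)).symm ((WithLp.equiv 2 (Fin d → ℝ)) x)) i‖ ^ 2 := by
    rw [Finset.mul_sum]
    apply Finset.sum_le_sum
    intro i _
    simp only [WithLp.equiv_symm_apply, WithLp.ofLp_toLp, Matrix.mulVec_diagonal, Real.norm_eq_abs, sq_abs]
    rw [mul_pow]
    have hv : (v i) ^ 2 ≤ c ^ 2 := by
      rw [← sq_abs]
      exact pow_le_pow_left₀ (abs_nonneg _) (h i) 2
    exact mul_le_mul_of_nonneg_right hv (sq_nonneg _)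
  calc Real.sqrt (∑ i, ‖((WithLp.equiv 2 (Fin d → ℝ)).symm
        (Matrix.diagonal v *ᵥ (WithLp.equiv 2 (Fin d → ℝ)) x)) i‖ ^ 2)
      ≤ Real.sqrt (c ^ 2 * ∑ i, ‖((WithLp.equiv 2 (Fin d → ℝ)).symm ((WithLp.equiv 2 (Fin d → ℝ)) x)) i‖ ^ 2) :=
        Real.sqrt_le_sqrt key
    _ = c * Real.sqrt (∑ i, ‖((WithLp.equiv 2 (Fin d → ℝ)).symm ((WithLp.equiv 2 (Fin d → ℝ)) x)) i‖ ^ 2) := by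
        rw [Real.sqrt_mul (sq_nonneg c), Real.sqrt_sq hc]

lemma diag_le_specNorm {d : ℕ} (N : Matrix (Fin d) (Fin d) ℝ) (i : Fin d) :
    |N i i| ≤ specNorm N := by
  set e : EuclideanSpace ℝ (Fin d) := EuclideanSpace.single i 1 with he
  have hnorm : ‖e‖ = 1 := by simp [he, EuclideanSpace.norm_single]
  have happ : (Matrix.toEuclideanCLM (𝕜 := ℝ) N) e = (WithLp.equiv 2 (Fin d → ℝ)).symm (N *ᵥ Pi.single i 1) := by
    rw [he]; rfl
  have h1 : inner ℝ e ((Matrix.toEuclideanCLM (𝕜 := ℝ) N) e) = N i i := by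
    rw [happ, he, EuclideanSpace.inner_single_left]
    simp [Matrix.mulVec_single]
  calc |N i i| = |inner ℝ e ((Matrix.toEuclideanCLM (𝕜 := ℝ) N) e)| := by rw [h1]
    _ ≤ ‖e‖ * ‖(Matrix.toEuclideanCLM (𝕜 := ℝ) N) e‖ := abs_real_inner_le_norm _ _
    _ ≤ ‖e‖ * (‖Matrix.toEuclideanCLM (𝕜 := ℝ) N‖ * ‖e‖) := by
        gcongr; exact ContinuousLinearMap.le_opNorm _ _
    _ = specNorm N := by rw [hnorm]; ring_nf; rfl

lemma traceInner_formula {d : ℕ} (w u : Fin d → ℝ) (A : Matrix (Fin d) (Fin d) ℝ) :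
    traceInner (Matrix.diagonal w) (A * Matrix.diagonal u * Aᵀ) =
      ∑ i, w i * ∑ j, A i j ^ 2 * u j := by
  have hB : ∀ i, (A * Matrix.diagonal u * Aᵀ) i i = ∑ j, A i j ^ 2 * u j := by
    intro i
    rw [Matrix.mul_apply]
    refine Finset.sum_congr rfl fun j _ => ?_
    rw [Matrix.mul_diagonal, Matrix.transpose_apply]; ring
  unfold traceInner
  rw [Matrix.diagonal_transpose, Matrix.trace]
  refine Finset.sum_congr rfl fun i _ => ?_
  rw [Matrix.diag_apply, Matrix.diagonal_mul, hB]

lemma sandwich_diag {d : ℕ} (w : Fin d → ℝ) (B : Matrix (Fin d) (Fin d) ℝ) (i : Fin d) :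
    (Bᵀ * Matrix.diagonal w * B) i i = ∑ k, w k * (B k i) ^ 2 := by
  rw [Matrix.mul_apply]
  refine Finset.sum_congr rfl fun k _ => ?_
  rw [Matrix.mul_diagonal, Matrix.transpose_apply]; ring

/-- Diagonal reduction of the minimax objective. With
`S' = diag(λ_i/m_i)` and `R' = diag(r_i/m_i)`, the minimum over `A ∈ ℝ^{d×d}` of
`(1/π²)·‖(I−A)ᵀ R' (I−A)‖ + (σ²/n)·⟨R', A (S')⁻¹ Aᵀ⟩` equals the minimum over `τ ≥ 0` of
`τ²/π² + Σ_{i ∈ 𝕂_τ} (1 − τ√(m_i/r_i))² σ² r_i/(n λ_i)`, `𝕂_τ = {k : r_k/m_k > τ²}`, and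
this common value is at least `(1/4)·min_{τ ≥ 0} (τ²/π² + Σ_{i ∈ 𝕂_τ} σ² r_i/(n λ_i))`. -/
theorem diagonal_lower_bound_reduction {d : ℕ}
    (lam m r : Fin d → ℝ)
    (hlam : ∀ i, 0 < lam i) (hm : ∀ i, 0 < m i) (hr : ∀ i, 0 ≤ r i)
    (σ2 : ℝ) (hσ2 : 0 < σ2) (n : ℕ) (hn : 0 < n)
    (S' R' : Matrix (Fin d) (Fin d) ℝ)
    (hS' : S' = Matrix.diagonal fun i => lam i / m i)
    (hR' : R' = Matrix.diagonal fun i => r i / m i) :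
    sInf {x : ℝ | ∃ A : Matrix (Fin d) (Fin d) ℝ,
        x = (1 / Real.pi ^ 2) * specNorm ((1 - A)ᵀ * R' * (1 - A)) +
          (σ2 / n) * traceInner R' (A * S'⁻¹ * Aᵀ)} =
      sInf {x : ℝ | ∃ τ : ℝ, 0 ≤ τ ∧
        x = τ ^ 2 / Real.pi ^ 2 +
          ∑ i ∈ Finset.univ.filter (fun i : Fin d => r i / m i > τ ^ 2),
            (1 - τ * Real.sqrt (m i / r i)) ^ 2 * (σ2 * r i / (n * lam i))} ∧
    sInf {x : ℝ | ∃ A : Matrix (Fin d) (Fin d) ℝ,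
        x = (1 / Real.pi ^ 2) * specNorm ((1 - A)ᵀ * R' * (1 - A)) +
          (σ2 / n) * traceInner R' (A * S'⁻¹ * Aᵀ)} ≥
      (1 / 4) * sInf {x : ℝ | ∃ τ : ℝ, 0 ≤ τ ∧
        x = τ ^ 2 / Real.pi ^ 2 +
          ∑ i ∈ Finset.univ.filter (fun i : Fin d => r i / m i > τ ^ 2),
            σ2 * r i / (n * lam i)} := by
  classical
  have hπ : (0:ℝ) < Real.pi ^ 2 := by positivity
  have hn' : (0:ℝ) < (n:ℝ) := Nat.cast_pos.mpr hn
  set w : Fin d → ℝ := fun i => r i / m i with hw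
  have hw0 : ∀ i, 0 ≤ w i := fun i => div_nonneg (hr i) (hm i).le
  have hS'inv : S'⁻¹ = Matrix.diagonal (fun i => m i / lam i) := by
    rw [hS']
    apply Matrix.inv_eq_right_inv
    rw [Matrix.diagonal_mul_diagonal]
    have hone : (fun i => lam i / m i * (m i / lam i)) = fun _ : Fin d => (1:ℝ) := by
      funext i
      rw [div_mul_div_comm, mul_comm (lam i) (m i), div_self (mul_pos (hm i) (hlam i)).ne']
    rw [hone, Matrix.diagonal_one]
  -- abbreviations
  set F : Matrix (Fin d) (Fin d) ℝ → ℝ := fun A =>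
    (1 / Real.pi ^ 2) * specNorm ((1 - A)ᵀ * R' * (1 - A)) +
      (σ2 / n) * traceInner R' (A * S'⁻¹ * Aᵀ) with hF
  set c : Fin d → ℝ := fun i => σ2 * r i / (n * lam i) with hc
  have hc0 : ∀ i, 0 ≤ c i := fun i =>
    div_nonneg (mul_nonneg hσ2.le (hr i)) (mul_nonneg hn'.le (hlam i).le)
  set G : ℝ → ℝ := fun τ => τ ^ 2 / Real.pi ^ 2 +
      ∑ i ∈ Finset.univ.filter (fun i : Fin d => w i > τ ^ 2),
        (1 - τ * Real.sqrt (m i / r i)) ^ 2 * c i with hG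
  set H : ℝ → ℝ := fun τ => τ ^ 2 / Real.pi ^ 2 +
      ∑ i ∈ Finset.univ.filter (fun i : Fin d => w i > τ ^ 2), c i with hH
  set SA := {x : ℝ | ∃ A : Matrix (Fin d) (Fin d) ℝ, x = F A} with hSA
  set ST := {x : ℝ | ∃ τ : ℝ, 0 ≤ τ ∧ x = G τ} with hST
  set SH := {x : ℝ | ∃ τ : ℝ, 0 ≤ τ ∧ x = H τ} with hSH
  -- trace formula
  have htr : ∀ A : Matrix (Fin d) (Fin d) ℝ,
      traceInner R' (A * S'⁻¹ * Aᵀ) = ∑ i, w i * ∑ j, A i j ^ 2 * (m j / lam j) := by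
    intro A
    rw [hR', hS'inv, traceInner_formula]
  have htr0 : ∀ A : Matrix (Fin d) (Fin d) ℝ, 0 ≤ traceInner R' (A * S'⁻¹ * Aᵀ) := by
    intro A
    rw [htr]
    refine Finset.sum_nonneg fun i _ => mul_nonneg (hw0 i) (Finset.sum_nonneg fun j _ => ?_)
    exact mul_nonneg (sq_nonneg _) (div_nonneg (hm j).le (hlam j).le)
  have hF0 : ∀ A, 0 ≤ F A := by
    intro A
    rw [hF]
    have := htr0 A
    have h1 : (0:ℝ) ≤ specNorm ((1 - A)ᵀ * R' * (1 - A)) := norm_nonneg _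
    positivity
  have hG0 : ∀ τ, 0 ≤ G τ := by
    intro τ
    rw [hG]
    refine add_nonneg (by positivity) (Finset.sum_nonneg fun i _ => ?_)
    exact mul_nonneg (sq_nonneg _) (hc0 i)
  have hH0 : ∀ τ, 0 ≤ H τ := by
    intro τ
    rw [hH]
    exact add_nonneg (by positivity) (Finset.sum_nonneg fun i _ => hc0 i)
  have bddA : BddBelow SA := ⟨0, fun x ⟨A, hA⟩ => hA ▸ hF0 A⟩
  have bddT : BddBelow ST := ⟨0, fun x ⟨τ, _, hτ⟩ => hτ ▸ hG0 τ⟩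
  have bddH : BddBelow SH := ⟨0, fun x ⟨τ, _, hτ⟩ => hτ ▸ hH0 τ⟩
  have hAne : SA.Nonempty := ⟨F 0, 0, rfl⟩
  have hTne : ST.Nonempty := ⟨G 0, 0, le_refl 0, rfl⟩
  -- positivity of r on the covered set
  have hrpos : ∀ (τ : ℝ) (i : Fin d), w i > τ ^ 2 → 0 < r i := by
    intro τ i hi
    rcases lt_or_eq_of_le (hr i) with h | h
    · exact h
    · exfalso
      rw [hw] at hi
      simp only [← h, zero_div] at hi
      exact absurd hi (not_lt.mpr (sq_nonneg τ))
  -- KEY 1 : ∀ A, ∃ τ ≥ 0, G τ ≤ F A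
  have key1 : ∀ A : Matrix (Fin d) (Fin d) ℝ, ∃ τ : ℝ, 0 ≤ τ ∧ G τ ≤ F A := by
    intro A
    set N := (1 - A)ᵀ * R' * (1 - A) with hN
    refine ⟨Real.sqrt (specNorm N), Real.sqrt_nonneg _, ?_⟩
    set τ := Real.sqrt (specNorm N) with hτdef
    have hτ2 : τ ^ 2 = specNorm N := Real.sq_sqrt (norm_nonneg _)
    have hτ0 : 0 ≤ τ := Real.sqrt_nonneg _
    -- pointwise claim
    have hpt : ∀ i, w i > τ ^ 2 → (1 - τ * Real.sqrt (m i / r i)) ^ 2 ≤ (A i i) ^ 2 := by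
      intro i hi
      have hri : 0 < r i := hrpos τ i hi
      have hNi : N i i ≤ τ ^ 2 := by
        rw [hτ2]
        exact (le_abs_self _).trans (diag_le_specNorm N i)
      have hNi' : w i * ((1 - A) i i) ^ 2 ≤ N i i := by
        rw [hN, hR']
        rw [sandwich_diag]
        exact Finset.single_le_sum (f := fun k => w k * ((1 - A) k i) ^ 2)
          (fun k _ => mul_nonneg (hw0 k) (sq_nonneg _)) (Finset.mem_univ i)
      have h1Aii : ((1 : Matrix (Fin d) (Fin d) ℝ) - A) i i = 1 - A i i := by
        simp [Matrix.sub_apply, Matrix.one_apply_eq]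
      rw [h1Aii] at hNi'
      set t := τ * Real.sqrt (m i / r i) with htdef
      have hs : Real.sqrt (m i / r i) ^ 2 = m i / r i :=
        Real.sq_sqrt (div_nonneg (hm i).le hri.le)
      have ht0 : 0 ≤ t := mul_nonneg hτ0 (Real.sqrt_nonneg _)
      have ht2 : t ^ 2 = τ ^ 2 * (m i / r i) := by rw [htdef, mul_pow, hs]
      have hmr : 0 < m i / r i := div_pos (hm i) hri
      have hwi : w i * (m i / r i) = 1 := by
        show r i / m i * (m i / r i) = 1
        rw [div_mul_div_comm, mul_comm (r i) (m i), div_self (mul_pos (hm i) hri).ne']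
      have ht1 : t ^ 2 < 1 := by
        rw [ht2, ← hwi]
        exact mul_lt_mul_of_pos_right hi hmr
      have hsq : (1 - A i i) ^ 2 ≤ t ^ 2 := by
        have h2 : w i * (1 - A i i) ^ 2 ≤ τ ^ 2 := hNi'.trans hNi
        have h3 := mul_le_mul_of_nonneg_right h2 hmr.le
        rw [ht2]
        calc (1 - A i i) ^ 2 = w i * (1 - A i i) ^ 2 * (m i / r i) := by
              rw [mul_comm (w i), mul_assoc, hwi, mul_one]
          _ ≤ τ ^ 2 * (m i / r i) := h3
      have habs : 1 - t ≤ A i i := by nlinarith [hsq, ht0, sq_nonneg (1 - A i i - t)]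
      have h1t : 0 ≤ 1 - t := by nlinarith [ht1, ht0]
      exact pow_le_pow_left₀ h1t habs 2
    -- sum chain
    rw [hG, hF]
    simp only
    rw [← hN, htr A]
    have hterm1 : τ ^ 2 / Real.pi ^ 2 = (1 / Real.pi ^ 2) * specNorm N := by
      rw [hτ2]; ring
    have hterm2 : ∑ i ∈ Finset.univ.filter (fun i : Fin d => w i > τ ^ 2),
        (1 - τ * Real.sqrt (m i / r i)) ^ 2 * c i ≤
        (σ2 / n) * ∑ i, w i * ∑ j, A i j ^ 2 * (m j / lam j) := by
      calc ∑ i ∈ Finset.univ.filter (fun i : Fin d => w i > τ ^ 2),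
            (1 - τ * Real.sqrt (m i / r i)) ^ 2 * c i
          ≤ ∑ i ∈ Finset.univ.filter (fun i : Fin d => w i > τ ^ 2), (A i i) ^ 2 * c i := by
            refine Finset.sum_le_sum fun i hi => ?_
            have := hpt i (Finset.mem_filter.mp hi).2
            exact mul_le_mul_of_nonneg_right this (hc0 i)
        _ ≤ ∑ i, (A i i) ^ 2 * c i := by
            refine Finset.sum_le_sum_of_subset_of_nonneg (Finset.filter_subset _ _)
              fun i _ _ => mul_nonneg (sq_nonneg _) (hc0 i)
        _ ≤ ∑ i, (σ2 / n) * (w i * ∑ j, A i j ^ 2 * (m j / lam j)) := by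
            refine Finset.sum_le_sum fun i _ => ?_
            have hsingle : A i i ^ 2 * (m i / lam i) ≤ ∑ j, A i j ^ 2 * (m j / lam j) :=
              Finset.single_le_sum (f := fun j => A i j ^ 2 * (m j / lam j))
                (fun j _ => mul_nonneg (sq_nonneg _) (div_nonneg (hm j).le (hlam j).le))
                (Finset.mem_univ i)
            have heqc : (A i i) ^ 2 * c i = (σ2 / n) * (w i * (A i i ^ 2 * (m i / lam i))) := by
              show A i i ^ 2 * (σ2 * r i / (↑n * lam i)) =
                σ2 / ↑n * (r i / m i * (A i i ^ 2 * (m i / lam i)))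
              field_simp [(hm i).ne', (hlam i).ne', hn'.ne']
            rw [heqc]
            have hco : (0:ℝ) ≤ (σ2 / n) * w i := mul_nonneg (div_nonneg hσ2.le hn'.le) (hw0 i)
            calc (σ2 / n) * (w i * (A i i ^ 2 * (m i / lam i)))
                = (σ2 / n) * w i * (A i i ^ 2 * (m i / lam i)) := by ring
              _ ≤ (σ2 / n) * w i * ∑ j, A i j ^ 2 * (m j / lam j) :=
                  mul_le_mul_of_nonneg_left hsingle hco
              _ = (σ2 / n) * (w i * ∑ j, A i j ^ 2 * (m j / lam j)) := by ring
        _ = (σ2 / n) * ∑ i, w i * ∑ j, A i j ^ 2 * (m j / lam j) := by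
            rw [Finset.mul_sum]
    rw [hterm1]
    exact add_le_add le_rfl hterm2
  -- KEY 2 : ∀ τ ≥ 0, ∃ A, F A ≤ G τ
  have key2 : ∀ τ : ℝ, 0 ≤ τ → ∃ A : Matrix (Fin d) (Fin d) ℝ, F A ≤ G τ := by
    intro τ hτ
    set a : Fin d → ℝ := fun i => if w i > τ ^ 2 then 1 - τ * Real.sqrt (m i / r i) else 0 with ha
    refine ⟨Matrix.diagonal a, ?_⟩
    have h1A : (1 : Matrix (Fin d) (Fin d) ℝ) - Matrix.diagonal a
        = Matrix.diagonal (fun i => 1 - a i) := by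
      rw [← Matrix.diagonal_one, Matrix.diagonal_sub]
    have hNdiag : ((1 : Matrix (Fin d) (Fin d) ℝ) - Matrix.diagonal a)ᵀ * R' *
        (1 - Matrix.diagonal a) = Matrix.diagonal (fun i => (1 - a i) ^ 2 * w i) := by
      rw [h1A, hR', Matrix.diagonal_transpose, Matrix.diagonal_mul_diagonal,
        Matrix.diagonal_mul_diagonal]
      exact congrArg Matrix.diagonal (funext fun i => by ring)
    have hspec : specNorm (Matrix.diagonal (fun i => (1 - a i) ^ 2 * w i)) ≤ τ ^ 2 := by
      apply specNorm_diagonal_le _ _ (sq_nonneg τ)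
      intro i
      rw [abs_of_nonneg (mul_nonneg (sq_nonneg _) (hw0 i))]
      by_cases hi : w i > τ ^ 2
      · have hri : 0 < r i := hrpos τ i hi
        have hai : 1 - a i = τ * Real.sqrt (m i / r i) := by rw [ha]; simp [hi]
        have hs : Real.sqrt (m i / r i) ^ 2 = m i / r i :=
          Real.sq_sqrt (div_nonneg (hm i).le hri.le)
        rw [hai, mul_pow, hs, hw]
        have : m i / r i * (r i / m i) = 1 := by
          rw [div_mul_div_comm, mul_comm (m i) (r i), div_self (mul_pos hri (hm i)).ne']
        rw [mul_assoc, this, mul_one]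
      · have hai : a i = 0 := by rw [ha]; simp [hi]
        rw [hai]
        push_neg at hi
        simpa using hi
    have htrd : traceInner R' (Matrix.diagonal a * S'⁻¹ * (Matrix.diagonal a)ᵀ) =
        ∑ i, w i * (a i ^ 2 * (m i / lam i)) := by
      rw [htr]
      refine Finset.sum_congr rfl fun i _ => ?_
      congr 1
      rw [Finset.sum_eq_single i]
      · rw [Matrix.diagonal_apply_eq]
      · intro j _ hj
        rw [Matrix.diagonal_apply_ne a (Ne.symm hj)]
        ring
      · intro h; exact absurd (Finset.mem_univ i) h
    have hsum : (σ2 / n) * ∑ i, w i * (a i ^ 2 * (m i / lam i)) =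
        ∑ i ∈ Finset.univ.filter (fun i : Fin d => w i > τ ^ 2),
          (1 - τ * Real.sqrt (m i / r i)) ^ 2 * c i := by
      rw [Finset.mul_sum]
      rw [← Finset.sum_filter_of_ne (p := fun i : Fin d => w i > τ ^ 2)
        (fun i _ hne => by
          by_contra hcon
          apply hne
          have : a i = 0 := by rw [ha]; simp [hcon]
          rw [this]; ring)]
      refine Finset.sum_congr rfl fun i hi => ?_
      have hi' := (Finset.mem_filter.mp hi).2
      have hai : a i = 1 - τ * Real.sqrt (m i / r i) := by rw [ha]; simp [hi']
      rw [hai]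
      show σ2 / ↑n * (r i / m i * ((1 - τ * Real.sqrt (m i / r i)) ^ 2 * (m i / lam i))) =
        (1 - τ * Real.sqrt (m i / r i)) ^ 2 * (σ2 * r i / (↑n * lam i))
      field_simp [(hm i).ne', (hlam i).ne', hn'.ne']
    rw [hF, hG]
    simp only
    rw [hNdiag, htrd, hsum]
    have : (1 / Real.pi ^ 2) * specNorm (Matrix.diagonal fun i => (1 - a i) ^ 2 * w i)
        ≤ τ ^ 2 / Real.pi ^ 2 := by
      rw [div_eq_mul_one_div (τ ^ 2), mul_comm (τ ^ 2)]
      exact mul_le_mul_of_nonneg_left hspec (by positivity)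
    exact add_le_add this le_rfl
  -- equality of the two infima
  have heq : sInf SA = sInf ST := by
    apply le_antisymm
    · refine le_csInf hTne fun x hx => ?_
      obtain ⟨τ, hτ0, hxe⟩ := hx
      obtain ⟨A, hA⟩ := key2 τ hτ0
      exact (csInf_le bddA ⟨A, rfl⟩).trans (hxe ▸ hA)
    · refine le_csInf hAne fun x hx => ?_
      obtain ⟨A, hxe⟩ := hx
      obtain ⟨τ, hτ0, hGF⟩ := key1 A
      exact (csInf_le bddT ⟨τ, hτ0, rfl⟩).trans (hxe ▸ hGF)
  refine ⟨heq, ?_⟩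
  -- lower bound part
  rw [heq, ge_iff_le]
  refine le_csInf hTne fun x hx => ?_
  obtain ⟨τ, hτ0, hxe⟩ := hx
  have hmem : H (2 * τ) ∈ SH := ⟨2 * τ, by linarith, rfl⟩
  have h1 : sInf SH ≤ H (2 * τ) := csInf_le bddH hmem
  have h2 : (1 / 4) * H (2 * τ) ≤ G τ := by
    rw [hH, hG]
    simp only
    have hfe : ((2 * τ) ^ 2 : ℝ) = 4 * τ ^ 2 := by ring
    have hsub : Finset.univ.filter (fun i : Fin d => w i > (2 * τ) ^ 2) ⊆
        Finset.univ.filter (fun i : Fin d => w i > τ ^ 2) := by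
      intro i hi
      rw [Finset.mem_filter] at hi ⊢
      refine ⟨hi.1, ?_⟩
      have := hi.2
      rw [hfe] at this
      nlinarith [sq_nonneg τ]
    have hsumle : ∑ i ∈ Finset.univ.filter (fun i : Fin d => w i > (2 * τ) ^ 2),
        (1 / 4) * c i ≤
        ∑ i ∈ Finset.univ.filter (fun i : Fin d => w i > τ ^ 2),
          (1 - τ * Real.sqrt (m i / r i)) ^ 2 * c i := by
      calc ∑ i ∈ Finset.univ.filter (fun i : Fin d => w i > (2 * τ) ^ 2), (1 / 4) * c i
          ≤ ∑ i ∈ Finset.univ.filter (fun i : Fin d => w i > (2 * τ) ^ 2),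
            (1 - τ * Real.sqrt (m i / r i)) ^ 2 * c i := by
            refine Finset.sum_le_sum fun i hi => ?_
            have hi' := (Finset.mem_filter.mp hi).2
            have hri : 0 < r i := hrpos (2 * τ) i hi'
            have hs : Real.sqrt (m i / r i) ^ 2 = m i / r i :=
              Real.sq_sqrt (div_nonneg (hm i).le hri.le)
            have hwi : w i * (m i / r i) = 1 := by
              show r i / m i * (m i / r i) = 1
              rw [div_mul_div_comm, mul_comm (r i) (m i), div_self (mul_pos (hm i) hri).ne']
            have hmr : 0 < m i / r i := div_pos (hm i) hri
            set t := τ * Real.sqrt (m i / r i) with htdef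
            have ht0 : 0 ≤ t := mul_nonneg hτ0 (Real.sqrt_nonneg _)
            have ht2 : t ^ 2 = τ ^ 2 * (m i / r i) := by rw [htdef, mul_pow, hs]
            have htq : t ^ 2 < 1 / 4 := by
              rw [hfe] at hi'
              rw [ht2]
              have h4 : 4 * τ ^ 2 * (m i / r i) < w i * (m i / r i) :=
                mul_lt_mul_of_pos_right hi' hmr
              rw [hwi] at h4
              linarith
            have hthalf : t < 1 / 2 := by nlinarith [ht0]
            have : (1 / 4 : ℝ) ≤ (1 - t) ^ 2 := by nlinarith
            exact mul_le_mul_of_nonneg_right this (hc0 i)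
        _ ≤ ∑ i ∈ Finset.univ.filter (fun i : Fin d => w i > τ ^ 2),
            (1 - τ * Real.sqrt (m i / r i)) ^ 2 * c i :=
            Finset.sum_le_sum_of_subset_of_nonneg hsub
              fun i _ _ => mul_nonneg (sq_nonneg _) (hc0 i)
    have hq : (1 / 4 : ℝ) * ((2 * τ) ^ 2 / Real.pi ^ 2) = τ ^ 2 / Real.pi ^ 2 := by
      rw [hfe]; ring
    calc (1 / 4 : ℝ) * ((2 * τ) ^ 2 / Real.pi ^ 2 +
          ∑ i ∈ Finset.univ.filter (fun i : Fin d => w i > (2 * τ) ^ 2), c i)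
        = τ ^ 2 / Real.pi ^ 2 +
          ∑ i ∈ Finset.univ.filter (fun i : Fin d => w i > (2 * τ) ^ 2), (1 / 4) * c i := by
          rw [mul_add, hq, Finset.mul_sum]
      _ ≤ τ ^ 2 / Real.pi ^ 2 +
          ∑ i ∈ Finset.univ.filter (fun i : Fin d => w i > τ ^ 2),
            (1 - τ * Real.sqrt (m i / r i)) ^ 2 * c i := add_le_add le_rfl hsumle
  calc (1 / 4 : ℝ) * sInf SH ≤ (1 / 4) * H (2 * τ) := mul_le_mul_of_nonneg_left h1 (by norm_num)
    _ ≤ G τ := h2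
    _ = x := hxe.symm

end
end
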